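/- arXiv:1701.04529 — 3 statements merged into one kernel-verified Lean document; each statement's English description precedes it below -/
import Mathlib

section
/- Let X be a finite set of N points in ℝ² in general position, let H ≥ 1 be an integer, and let K be an integer with K ≥ ⌈N/(2H)⌉. Then there exists a set L of K distinct affine lines in ℝ², each disjoint from X, such that every cell of L contains at most H points of X. -/
open Set

/-- Points of the plane. -/
abbrev Pt := ℝ × ℝ

/-- An affine line in ℝ², given by a nontrivial linear equation. -/
def IsAffLine (l : Set Pt) : Prop :=
  ∃ a b c : ℝ, (a ≠ 0 ∨ b ≠ 0) ∧ l = {p : Pt | a * p.1 + b * p.2 = c}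

/-- An open half-plane in ℝ². -/
def IsOpenHalfPlane (H : Set Pt) : Prop :=
  ∃ a b c : ℝ, (a ≠ 0 ∨ b ≠ 0) ∧ H = {p : Pt | a * p.1 + b * p.2 < c}

/-- `A` and `B` are linearly separable: some affine line has `A` strictly on
one side and `B` strictly on the other side. -/
def LinSep (A B : Set Pt) : Prop :=
  ∃ a b c : ℝ, (a ≠ 0 ∨ b ≠ 0) ∧ (∀ p ∈ A, a * p.1 + b * p.2 < c) ∧
    (∀ p ∈ B, c < a * p.1 + b * p.2)

/-- General position: no three (distinct) points of `X` are collinear. -/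
def GenPos (X : Set Pt) : Prop :=
  ∀ p ∈ X, ∀ q ∈ X, ∀ r ∈ X, p ≠ q → p ≠ r → q ≠ r →
    ¬ Collinear ℝ ({p, q, r} : Set Pt)

/-- Convex position: no point of `X` lies in the convex hull of the others. -/
def ConvexPos (X : Set Pt) : Prop :=
  ∀ p ∈ X, p ∉ convexHull ℝ (X \ {p})

/-- A cell of an arrangement `L` of lines: a connected component of the
complement of the union of the lines. -/
def IsCell (L : Set (Set Pt)) (cell : Set Pt) : Prop :=
  ∃ p ∈ (⋃₀ L)ᶜ, cell = connectedComponentIn (⋃₀ L)ᶜ p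

/-- `S` has at most `d` connected components: among any `d + 1` points of `S`,
two lie in the same connected component of `S`. -/
def CompsLE (S : Set Pt) (d : ℕ) : Prop :=
  ∀ f : Fin (d + 1) → Pt, (∀ i, f i ∈ S) →
    ∃ i j, i ≠ j ∧ connectedComponentIn S (f i) = connectedComponentIn S (f j)

/-- A Jordan curve: the image of a continuous injective map from the unit
circle to the plane. -/
def IsJordanCurve (J : Set Pt) : Prop :=
  ∃ f : EuclideanSpace ℝ (Fin 2) → Pt,
    ContinuousOn f (Metric.sphere 0 1) ∧ Set.InjOn f (Metric.sphere 0 1) ∧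
      J = f '' (Metric.sphere 0 1)

/-- `J` has stabbing number at most `d` (a natural number): every affine line
meets `J` in at most `d` connected components. -/
def StabLE (J : Set Pt) (d : ℕ) : Prop :=
  ∀ l, IsAffLine l → CompsLE (J ∩ l) d

/-- `J` has stabbing number at most a real number `d`: every affine line meets
`J` in at most `⌊d⌋₊` connected components. -/
def StabLER (J : Set Pt) (d : ℝ) : Prop :=
  ∀ l, IsAffLine l → CompsLE (J ∩ l) ⌊d⌋₊


namespace Stmt1
attribute [local instance] Classical.propDecidable

def dot (u p : Pt) : ℝ := u.1 * p.1 + u.2 * p.2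

def lineOf (u : Pt) (s : ℝ) : Set Pt := {p : Pt | u.1 * p.1 + u.2 * p.2 = s}

lemma dot_sub (u p q : Pt) : dot u (p - q) = dot u p - dot u q := by
  simp [dot, Prod.fst_sub, Prod.snd_sub]; ring

lemma ne_zero_iff (u : Pt) : u ≠ 0 ↔ (u.1 ≠ 0 ∨ u.2 ≠ 0) := by
  constructor
  · intro h
    by_contra hc
    push_neg at hc
    exact h (Prod.ext hc.1 hc.2)
  · rintro (h | h) rfl <;> simp at h

def perp (u : Pt) : Pt := (-u.2, u.1)

lemma dot_perp (u : Pt) : dot u (perp u) = 0 := by simp [dot, perp]; ring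

lemma normsq_pos {u : Pt} (hu : u ≠ 0) : 0 < u.1 * u.1 + u.2 * u.2 := by
  rcases (ne_zero_iff u).1 hu with h | h
  · have := mul_self_pos.mpr h
    nlinarith [mul_self_nonneg u.2]
  · have := mul_self_pos.mpr h
    nlinarith [mul_self_nonneg u.1]

lemma eq_zero_of_dot_eq_zero {u w : Pt} (hu : u ≠ 0) (h1 : dot u w = 0)
    (h2 : dot (perp u) w = 0) : w = 0 := by
  simp [dot, perp] at h1 h2
  have hn := (normsq_pos hu).ne'
  have e1 : (u.1 * u.1 + u.2 * u.2) * w.1 = 0 := by linear_combination u.1 * h1 - u.2 * h2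
  have e2 : (u.1 * u.1 + u.2 * u.2) * w.2 = 0 := by linear_combination u.2 * h1 + u.1 * h2
  exact Prod.ext (by rcases mul_eq_zero.1 e1 with h | h; exact absurd h hn; exact h)
    (by rcases mul_eq_zero.1 e2 with h | h; exact absurd h hn; exact h)

lemma collinear_of_dot_eq {u : Pt} (hu : u ≠ 0) (p q r : Pt)
    (hq : dot u q = dot u p) (hr : dot u r = dot u p) :
    Collinear ℝ ({p, q, r} : Set Pt) := by
  rw [collinear_iff_exists_forall_eq_smul_vadd]
  refine ⟨p, perp u, ?_⟩
  have key : ∀ y : Pt, dot u y = dot u p → ∃ t : ℝ, y = t • perp u +ᵥ p := by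
    intro y hy
    have hd : u.1 * (y.1 - p.1) + u.2 * (y.2 - p.2) = 0 := by
      simp only [dot] at hy
      linear_combination hy
    rcases (ne_zero_iff u).1 hu with h1 | h2
    · refine ⟨(y.2 - p.2) / u.1, ?_⟩
      have c1 : y.1 = ((y.2 - p.2) / u.1) * (-u.2) + p.1 := by
        field_simp
        linear_combination hd
      have c2 : y.2 = ((y.2 - p.2) / u.1) * u.1 + p.2 := by
        field_simp
        ring
      apply Prod.ext <;> simp [perp, c1.symm, c2.symm] <;> linarith [c1, c2]
    · refine ⟨(y.1 - p.1) / (-u.2), ?_⟩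
      have h2' : (-u.2 : ℝ) ≠ 0 := neg_ne_zero.mpr h2
      have c1 : y.1 = ((y.1 - p.1) / (-u.2)) * (-u.2) + p.1 := by
        field_simp
        ring
      have c2 : y.2 = ((y.1 - p.1) / (-u.2)) * u.1 + p.2 := by
        field_simp
        linear_combination hd
      apply Prod.ext <;> simp [perp, c1.symm, c2.symm] <;> linarith [c1, c2]
  intro x hx
  rcases hx with rfl | rfl | rfl
  · exact ⟨0, by simp⟩
  · exact key _ hq
  · exact key _ hr


lemma exists_mem_Ioo_avoiding {a b : ℝ} (h : a < b) (bad : Set ℝ) (hbad : bad.Finite) :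
    ∃ s, s ∈ Ioo a b ∧ s ∉ bad := by
  have : (Ioo a b \ bad).Nonempty := ((Set.Ioo_infinite h).diff hbad).nonempty
  obtain ⟨s, hs⟩ := this
  exact ⟨s, hs.1, hs.2⟩

lemma lineOf_inj {u : Pt} (hu : u ≠ 0) : Function.Injective (lineOf u) := by
  intro s s' h
  set n := u.1 * u.1 + u.2 * u.2 with hn
  have hn0 : n ≠ 0 := (normsq_pos hu).ne'
  have hp : (s * u.1 / n, s * u.2 / n) ∈ lineOf u s := by
    simp only [lineOf, mem_setOf_eq]
    field_simp
    ring
  rw [h] at hp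
  simp only [lineOf, mem_setOf_eq] at hp
  rw [← hp]
  field_simp
  ring

lemma exists_pivot : ∀ (α : ℕ) (S : Finset ℝ), α < S.card →
    ∃ x ∈ S, (S.filter (· < x)).card = α := by
  intro α
  induction α with
  | zero =>
    intro S hS
    have hne : S.Nonempty := Finset.card_pos.mp (by omega)
    refine ⟨S.min' hne, S.min'_mem hne, ?_⟩
    rw [Finset.card_eq_zero, Finset.filter_eq_empty_iff]
    intro x hx
    exact not_lt.mpr (S.min'_le x hx)
  | succ α ih =>
    intro S hS
    have hne : S.Nonempty := Finset.card_pos.mp (by omega)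
    set m := S.min' hne
    have hm : m ∈ S := S.min'_mem hne
    have hcard : α < (S.erase m).card := by
      rw [Finset.card_erase_of_mem hm]; omega
    obtain ⟨x, hx, hc⟩ := ih (S.erase m) hcard
    have hxS : x ∈ S := Finset.mem_of_mem_erase hx
    refine ⟨x, hxS, ?_⟩
    have hmx : m < x := lt_of_le_of_ne (S.min'_le x hxS) (fun h => (Finset.ne_of_mem_erase hx) h.symm)
    have : S.filter (· < x) = insert m ((S.erase m).filter (· < x)) := by
      ext y
      simp only [Finset.mem_filter, Finset.mem_insert, Finset.mem_erase]
      constructor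
      · rintro ⟨hy, hyx⟩
        by_cases hym : y = m
        · exact Or.inl hym
        · exact Or.inr ⟨⟨hym, hy⟩, hyx⟩
      · rintro (rfl | ⟨⟨hym, hy⟩, hyx⟩)
        · exact ⟨hm, hmx⟩
        · exact ⟨hy, hyx⟩
    rw [this, Finset.card_insert_of_notMem (by simp), hc]
    
lemma ne_zero_one_t (t : ℝ) : ((1:ℝ), t) ≠ (0 : Pt) := by
  intro h
  have := congrArg Prod.fst h
  simp at this

lemma exists_inj_dir (X : Finset Pt) : ∃ u : Pt, u ≠ 0 ∧ Set.InjOn (dot u) ↑X := by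
  set T := (X ×ˢ X).image (fun pq : Pt × Pt => (pq.1.1 - pq.2.1) / (pq.2.2 - pq.1.2))
  obtain ⟨t, ht⟩ := Infinite.exists_notMem_finset T
  refine ⟨(1, t), ne_zero_one_t t, ?_⟩
  intro p hp q hq h
  simp only [dot, one_mul] at h
  by_cases h2 : p.2 = q.2
  · have : p.1 = q.1 := by rw [h2] at h; linarith
    exact Prod.ext this h2
  · exfalso
    apply ht
    have h2' : q.2 - p.2 ≠ 0 := fun hc => h2 (by linarith)
    have : t = (p.1 - q.1) / (q.2 - p.2) := by
      field_simp
      linarith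
    rw [Finset.mem_image]
    exact ⟨(p, q), Finset.mem_product.mpr ⟨hp, hq⟩, this.symm⟩

lemma threshold (X A B : Finset Pt) (u : Pt) (hu : u ≠ 0) (x : ℝ) (α β : ℕ)
    (hcA : (A.filter (fun p => dot u p < x)).card = α)
    (hcB : (B.filter (fun p => dot u p < x)).card = β) (F : Finset (Set Pt)) :
    ∃ s : ℝ, (∀ p ∈ X, dot u p ≠ s) ∧
      (A.filter (fun p => dot u p < s)).card = α ∧
      (B.filter (fun p => dot u p < s)).card = β ∧ lineOf u s ∉ F := by
  classical
  set W := ((A ∪ B).image (dot u)).filter (· < x) with hW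
  set aLow := if h : W.Nonempty then W.max' h else x - 1 with haLow
  have hWlt : ∀ y ∈ W, y < x := by
    intro y hy
    rw [hW] at hy
    exact (Finset.mem_filter.mp hy).2
  have haLow_lt : aLow < x := by
    rw [haLow]
    split
    · next h => exact hWlt _ (W.max'_mem h)
    · linarith
  have hWle : ∀ y ∈ W, y ≤ aLow := by
    intro y hy
    have hne : W.Nonempty := ⟨y, hy⟩
    rw [haLow, dif_pos hne]
    exact W.le_max' y hy
  have hmemW0 : ∀ p ∈ A ∪ B, dot u p < x → dot u p ∈ W := by
    intro p hp hpx
    rw [hW]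
    exact Finset.mem_filter.mpr ⟨Finset.mem_image_of_mem _ hp, hpx⟩
  set bad : Set ℝ := (↑(X.image (dot u)) : Set ℝ) ∪ (lineOf u ⁻¹' ↑F) with hbad
  have hbadfin : bad.Finite := by
    apply Set.Finite.union (Finset.finite_toSet _)
    exact Set.Finite.preimage ((lineOf_inj hu).injOn) (Finset.finite_toSet F)
  obtain ⟨s, hs1, hs2⟩ := exists_mem_Ioo_avoiding haLow_lt bad hbadfin
  have hmemW : ∀ p ∈ A ∪ B, dot u p < x → dot u p ≤ aLow := by
    intro p hp hpx
    exact hWle _ (hmemW0 p hp hpx)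
  have hiff : ∀ p ∈ A ∪ B, (dot u p < s ↔ dot u p < x) := by
    intro p hp
    constructor
    · intro h; exact lt_trans h hs1.2
    · intro h; exact lt_of_le_of_lt (hmemW p hp h) hs1.1
  refine ⟨s, ?_, ?_, ?_, ?_⟩
  · intro p hp hps
    exact hs2 (Or.inl (by rw [Finset.coe_image]; exact ⟨p, hp, hps⟩))
  · rw [Finset.filter_congr (fun p hp => hiff p (Finset.mem_union_left _ hp))]
    exact hcA
  · rw [Finset.filter_congr (fun p hp => hiff p (Finset.mem_union_right _ hp))]
    exact hcB
  · intro hF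
    exact hs2 (Or.inr hF)


noncomputable def cnt (k : Pt → ℝ) (A : Finset Pt) (q : Pt) : ℕ :=
  (A.filter (fun a => k a < k q)).card

noncomputable def Fcnt (k : Pt → ℝ) (A B : Finset Pt) (α : ℕ) : ℕ :=
  (B.filter (fun q => cnt k A q ≤ α)).card

lemma three_pt {X : Finset Pt} (hgp : GenPos ↑X) {u₀ : Pt} (hu₀ : u₀ ≠ 0)
    {p q r : Pt} (hp : p ∈ X) (hq : q ∈ X) (hr : r ∈ X)
    (hpq : p ≠ q) (hpr : p ≠ r) (hqr : q ≠ r)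
    (h1 : dot u₀ q = dot u₀ p) (h2 : dot u₀ r = dot u₀ p) : False :=
  hgp p hp q hq r hr hpq hpr hqr (collinear_of_dot_eq hu₀ p q r h1 h2)

lemma cnt_split {A : Finset Pt} {q2 a2 : Pt} (ha2 : a2 ∈ A) (kk k₀ : Pt → ℝ)
    (hk₀a2 : k₀ a2 = k₀ q2)
    (hiff : ∀ a ∈ A.erase a2, (kk a < kk q2 ↔ k₀ a < k₀ q2)) :
    cnt kk A q2 = (A.filter (fun a => k₀ a < k₀ q2)).card
      + (if kk a2 < kk q2 then 1 else 0) := by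
  classical
  have hins : A = insert a2 (A.erase a2) := (Finset.insert_erase ha2).symm
  have herase : (A.erase a2).filter (fun a => kk a < kk q2)
      = (A.erase a2).filter (fun a => k₀ a < k₀ q2) := Finset.filter_congr hiff
  have hn : (A.filter (fun a => k₀ a < k₀ q2)).card
      = ((A.erase a2).filter (fun a => k₀ a < k₀ q2)).card := by
    rw [Finset.filter_erase, Finset.erase_eq_of_notMem (by simp [hk₀a2])]
  rw [cnt]
  conv_lhs => rw [hins]
  rw [Finset.filter_insert]
  split
  · next h =>
    rw [Finset.card_insert_of_notMem (by simp), herase, ← hn]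
  · next h =>
    rw [herase, ← hn]
    omega

lemma deltaF (X : Finset Pt) (hgp : GenPos ↑X) (A B : Finset Pt)
    (hAX : A ⊆ X) (hBX : B ⊆ X) (hAB : Disjoint A B)
    (k k' : Pt → ℝ) (u₀ : Pt) (hu₀ : u₀ ≠ 0)
    (horder : ∀ p ∈ A ∪ B, ∀ q ∈ A ∪ B, p ≠ q → dot u₀ p ≠ dot u₀ q →
      ((k p < k q ↔ dot u₀ p < dot u₀ q) ∧ (k' p < k' q ↔ dot u₀ p < dot u₀ q)))
    (α : ℕ) : Fcnt k A B α ≤ Fcnt k' A B α + 1 := by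
  classical
  set k₀ : Pt → ℝ := dot u₀ with hk₀def
  set D := B.filter (fun q => ¬ (cnt k A q ≤ α ↔ cnt k' A q ≤ α)) with hD
  have hABne : ∀ a ∈ A, ∀ b ∈ B, a ≠ b := by
    intro a ha b hb h
    exact Finset.disjoint_left.mp hAB ha (h ▸ hb)
  have step1 : ∀ q ∈ D, ∃ a ∈ A, k₀ a = k₀ q := by
    intro q hq
    rw [hD, Finset.mem_filter] at hq
    by_contra hc
    push_neg at hc
    apply hq.2
    have hiffa : ∀ a ∈ A, (k a < k q ↔ k' a < k' q) := by
      intro a ha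
      have h := horder a (Finset.mem_union_left _ ha) q (Finset.mem_union_right _ hq.1)
        (hABne a ha q hq.1) (hc a ha)
      rw [h.1, h.2]
    have : cnt k A q = cnt k' A q := by
      rw [cnt, cnt, Finset.filter_congr (fun a ha => hiffa a ha)]
    rw [this]
  have aux : ∀ q1 ∈ D, ∀ q2 ∈ D, q1 ≠ q2 → k₀ q1 < k₀ q2 → False := by
    intro q1 hq1 q2 hq2 hne hlt
    obtain ⟨a1, ha1, hka1⟩ := step1 q1 hq1
    obtain ⟨a2, ha2, hka2⟩ := step1 q2 hq2
    rw [hD, Finset.mem_filter] at hq1 hq2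
    have hq1B := hq1.1
    have hq2B := hq2.1
    -- splitting hypothesis at (q2, a2)
    have hsplit : ∀ (qq aa : Pt), aa ∈ A → qq ∈ B → k₀ aa = k₀ qq →
        ∀ a ∈ A.erase aa, ((k a < k qq ↔ k₀ a < k₀ qq) ∧ (k' a < k' qq ↔ k₀ a < k₀ qq)) := by
      intro qq aa haa hqq hkaa a ha
      have haA := Finset.mem_of_mem_erase ha
      have hane : a ≠ aa := Finset.ne_of_mem_erase ha
      have hk₀ne : k₀ a ≠ k₀ qq := by
        intro h
        exact three_pt hgp hu₀ (hAX haA) (hAX haa) (hBX hqq) hane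
          (hABne a haA qq hqq) (hABne aa haa qq hqq)
          (hkaa.trans h.symm) h.symm
      exact horder a (Finset.mem_union_left _ haA) qq (Finset.mem_union_right _ hqq)
        (hABne a haA qq hqq) hk₀ne
    set n := (A.filter (fun a => k₀ a < k₀ q2)).card with hn
    have hc2 : cnt k A q2 = n + (if k a2 < k q2 then 1 else 0) :=
      cnt_split ha2 k k₀ hka2 (fun a ha => (hsplit q2 a2 ha2 hq2B hka2 a ha).1)
    have hc2' : cnt k' A q2 = n + (if k' a2 < k' q2 then 1 else 0) :=
      cnt_split ha2 k' k₀ hka2 (fun a ha => (hsplit q2 a2 ha2 hq2B hka2 a ha).2)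
    have hnα : n = α := by
      by_cases h1 : k a2 < k q2 <;> by_cases h2 : k' a2 < k' q2 <;>
        simp [h1, h2] at hc2 hc2' <;> omega
    set m := (A.filter (fun a => k₀ a < k₀ q1)).card with hm
    have hmn : m + 1 ≤ n := by
      have hsub : insert a1 (A.filter (fun a => k₀ a < k₀ q1))
          ⊆ A.filter (fun a => k₀ a < k₀ q2) := by
        intro a ha
        rcases Finset.mem_insert.mp ha with rfl | ha'
        · exact Finset.mem_filter.mpr ⟨ha1, by rw [hka1]; exact hlt⟩
        · have := Finset.mem_filter.mp ha'
          exact Finset.mem_filter.mpr ⟨this.1, lt_trans this.2 hlt⟩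
      have := Finset.card_le_card hsub
      rwa [Finset.card_insert_of_notMem (by simp [hka1])] at this
    have hc1 : cnt k A q1 = m + (if k a1 < k q1 then 1 else 0) :=
      cnt_split ha1 k k₀ hka1 (fun a ha => (hsplit q1 a1 ha1 hq1B hka1 a ha).1)
    have hc1' : cnt k' A q1 = m + (if k' a1 < k' q1 then 1 else 0) :=
      cnt_split ha1 k' k₀ hka1 (fun a ha => (hsplit q1 a1 ha1 hq1B hka1 a ha).2)
    apply hq1.2
    constructor <;> intro _ <;>
      [skip; skip] <;>
      · by_cases h1 : k a1 < k q1 <;> by_cases h2 : k' a1 < k' q1 <;>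
          simp [h1, h2] at hc1 hc1' <;> omega
  have hDcard : D.card ≤ 1 := by
    rw [Finset.card_le_one]
    intro q1 hq1 q2 hq2
    by_contra hne
    have hq1B : q1 ∈ B := (Finset.mem_filter.mp (hD ▸ hq1)).1
    have hq2B : q2 ∈ B := (Finset.mem_filter.mp (hD ▸ hq2)).1
    have hk₀ne : k₀ q1 ≠ k₀ q2 := by
      intro h
      obtain ⟨a1, ha1, hka1⟩ := step1 q1 hq1
      exact three_pt hgp hu₀ (hBX hq1B) (hBX hq2B) (hAX ha1) hne
        (Ne.symm (hABne a1 ha1 q1 hq1B)) (Ne.symm (hABne a1 ha1 q2 hq2B))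
        h.symm hka1
    rcases lt_or_gt_of_ne hk₀ne with h | h
    · exact aux q1 hq1 q2 hq2 hne h
    · exact aux q2 hq2 q1 hq1 (Ne.symm hne) h
  -- conclude
  have hsub : B.filter (fun q => cnt k A q ≤ α)
      ⊆ (B.filter (fun q => cnt k' A q ≤ α)) ∪ D := by
    intro q hq
    have hqm := Finset.mem_filter.mp hq
    by_cases h' : cnt k' A q ≤ α
    · exact Finset.mem_union_left _ (Finset.mem_filter.mpr ⟨hqm.1, h'⟩)
    · refine Finset.mem_union_right _ ?_
      rw [hD, Finset.mem_filter]
      exact ⟨hqm.1, fun hiff => h' (hiff.mp hqm.2)⟩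
  calc Fcnt k A B α ≤ ((B.filter (fun q => cnt k' A q ≤ α)) ∪ D).card :=
        Finset.card_le_card hsub
    _ ≤ Fcnt k' A B α + D.card := Finset.card_union_le _ _
    _ ≤ Fcnt k' A B α + 1 := by omega


lemma sign_const {f : ℝ → ℝ} (hf : Continuous f) {a b : ℝ} (hab : a ≤ b)
    (h0 : ∀ t ∈ Icc a b, f t ≠ 0) : (f a < 0 ↔ f b < 0) := by
  constructor
  · intro ha
    by_contra hb
    have hb' : 0 < f b := lt_of_le_of_ne (not_lt.mp hb) (Ne.symm (h0 b ⟨hab, le_refl b⟩))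
    have : (0:ℝ) ∈ Icc (f a) (f b) := ⟨le_of_lt ha, le_of_lt hb'⟩
    obtain ⟨t, ht, hft⟩ := intermediate_value_Icc hab hf.continuousOn this
    exact h0 t ht hft
  · intro hb
    by_contra ha
    have ha' : 0 < f a := lt_of_le_of_ne (not_lt.mp ha) (Ne.symm (h0 a ⟨le_refl a, hab⟩))
    have : (0:ℝ) ∈ Icc (f b) (f a) := ⟨le_of_lt hb, le_of_lt ha'⟩
    obtain ⟨t, ht, hft⟩ := intermediate_value_Icc' hab hf.continuousOn this
    exact h0 t ht hft

lemma chain (E : Finset ℝ) (F : ℝ → ℕ)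
    (step : ∀ s s', s < s' → s ∉ E → s' ∉ E →
      (E.filter (· ∈ Ioo s s')).card ≤ 1 → (F s ≤ F s' + 1 ∧ F s' ≤ F s + 1)) :
    ∀ (n : ℕ) (a : ℝ) (b : ℝ), a < b → a ∉ E → b ∉ E →
    (E.filter (· ∈ Ioo a b)).card = n →
    ∀ β, ((F a ≤ β ∧ β ≤ F b) ∨ (F b ≤ β ∧ β ≤ F a)) →
    ∃ t, t ∉ E ∧ F t = β := by
  intro n
  induction n with
  | zero =>
    intro a b hab haE hbE hcard β hβ
    have hst := step a b hab haE hbE (by omega)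
    have : β = F a ∨ β = F b := by omega
    rcases this with h | h
    · exact ⟨a, haE, h.symm⟩
    · exact ⟨b, hbE, h.symm⟩
  | succ n ih =>
    intro a b hab haE hbE hcard β hβ
    classical
    set Efil := E.filter (· ∈ Ioo a b) with hEfil
    have hne : Efil.Nonempty := Finset.card_pos.mp (by omega)
    set e := Efil.min' hne with he
    have heM : e ∈ Efil := Efil.min'_mem hne
    have heE : e ∈ E := (Finset.mem_filter.mp (heM)).1
    have heI : e ∈ Ioo a b := (Finset.mem_filter.mp (heM)).2
    set rest := Efil.erase e with hrest
    set next := if h : rest.Nonempty then rest.min' h else b with hnext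
    have hnext_gt : e < next := by
      rw [hnext]
      split
      · next h =>
        have hm : rest.min' h ∈ rest := rest.min'_mem h
        have h1 : rest.min' h ∈ Efil := Finset.mem_of_mem_erase (hm)
        have h2 : rest.min' h ≠ e := Finset.ne_of_mem_erase (hm)
        exact lt_of_le_of_ne (Efil.min'_le _ h1) (Ne.symm h2)
      · exact heI.2
    have hnext_le : next ≤ b := by
      rw [hnext]
      split
      · next h =>
        have hm : rest.min' h ∈ Efil := Finset.mem_of_mem_erase (rest.min'_mem h)
        exact le_of_lt (Finset.mem_filter.mp (hm)).2.2
      · exact le_refl b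
    have hrest_ge : ∀ x ∈ rest, next ≤ x := by
      intro x hx
      have hne' : rest.Nonempty := ⟨x, hx⟩
      rw [hnext, dif_pos hne']
      exact rest.min'_le x hx
    set s' := (e + next) / 2 with hs'
    have hes' : e < s' := by rw [hs']; linarith
    have hs'next : s' < next := by rw [hs']; linarith
    have hs'I : s' ∈ Ioo a b := ⟨lt_trans heI.1 hes', lt_of_lt_of_le hs'next hnext_le⟩
    have hs'E : s' ∉ E := by
      intro h
      have hsf : s' ∈ Efil := by rw [hEfil]; exact Finset.mem_filter.mpr ⟨h, hs'I⟩
      have : s' ∈ rest := by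
        rw [hrest]
        exact Finset.mem_erase.mpr ⟨ne_of_gt hes', hsf⟩
      exact absurd (hrest_ge s' this) (not_le.mpr hs'next)
    have hstep1 : (E.filter (· ∈ Ioo a s')).card ≤ 1 := by
      have hsub : E.filter (· ∈ Ioo a s') ⊆ {e} := by
        intro x hx
        have hx' := Finset.mem_filter.mp hx
        have hxf : x ∈ Efil := by
          rw [hEfil]
          exact Finset.mem_filter.mpr ⟨hx'.1, ⟨hx'.2.1, lt_trans hx'.2.2 hs'I.2⟩⟩
        by_cases hxe : x = e
        · simp [hxe]
        · exfalso
          have : x ∈ rest := by rw [hrest]; exact Finset.mem_erase.mpr ⟨hxe, hxf⟩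
          have := hrest_ge x this
          have := hx'.2.2
          linarith
      calc (E.filter (· ∈ Ioo a s')).card ≤ ({e} : Finset ℝ).card := Finset.card_le_card hsub
        _ = 1 := Finset.card_singleton e
    have hrec : (E.filter (· ∈ Ioo s' b)).card = n := by
      have heq : E.filter (· ∈ Ioo s' b) = rest := by
        ext x
        constructor
        · intro hx
          have hx' := Finset.mem_filter.mp hx
          have hxf : x ∈ Efil := by
            rw [hEfil]
            exact Finset.mem_filter.mpr ⟨hx'.1, ⟨lt_trans hs'I.1 hx'.2.1, hx'.2.2⟩⟩
          rw [hrest]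
          refine Finset.mem_erase.mpr ⟨?_, hxf⟩
          intro hxe
          rw [hxe] at hx'
          exact absurd hx'.2.1 (not_lt.mpr (le_of_lt hes'))
        · intro hx
          have hxf : x ∈ Efil := Finset.mem_of_mem_erase (hx)
          have hx' := Finset.mem_filter.mp (hxf)
          refine Finset.mem_filter.mpr ⟨hx'.1, ⟨?_, hx'.2.2⟩⟩
          exact lt_of_lt_of_le hs'next (hrest_ge x hx)
      rw [heq, hrest, Finset.card_erase_of_mem heM]
      omega
    have hstep := step a s' (lt_trans heI.1 hes') haE hs'E hstep1
    by_cases hcase : (F s' ≤ β ∧ β ≤ F b) ∨ (F b ≤ β ∧ β ≤ F s')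
    · exact ih s' b hs'I.2 hs'E hbE hrec β hcase
    · push_neg at hcase
      have : β = F a ∨ β = F s' := by omega
      rcases this with h | h
      · exact ⟨a, haE, h.symm⟩
      · exact ⟨s', hs'E, h.symm⟩


lemma dot_comm (u p : Pt) : dot u p = dot p u := by simp [dot]; ring

/-- a perturbed direction keeping injectivity and pairwise order -/
lemma perturb (S : Finset Pt) (w : Pt) (hw : w ≠ 0) (v : Pt)
    (hzero : ∀ d : Pt, dot w d = 0 → dot v d = 0 → d = 0) (bnd : ℝ) (hbnd : 0 < bnd) :
    ∃ η : ℝ, 0 < η ∧ η < bnd ∧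
      Set.InjOn (fun p => dot w p + η * dot v p) ↑S := by
  classical
  set T := (S ×ˢ S).image
    (fun pq : Pt × Pt => -(dot w pq.1 - dot w pq.2) / (dot v pq.1 - dot v pq.2)) with hT
  obtain ⟨η, hη1, hη2⟩ := exists_mem_Ioo_avoiding hbnd (↑T : Set ℝ) (Finset.finite_toSet T)
  refine ⟨η, hη1.1, hη1.2, ?_⟩
  intro p hp q hq h
  simp only at h
  by_contra hne
  have hd : dot w (p - q) + η * dot v (p - q) = 0 := by
    have e1 : dot w (p - q) = dot w p - dot w q := by simp [dot, Prod.fst_sub, Prod.snd_sub]; ring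
    have e2 : dot v (p - q) = dot v p - dot v q := by simp [dot, Prod.fst_sub, Prod.snd_sub]; ring
    rw [e1, e2]; linarith [h]
  by_cases hv : dot v (p - q) = 0
  · rw [hv, mul_zero, add_zero] at hd
    exact hne (sub_eq_zero.mp (hzero _ hd hv))
  · apply hη2
    have : η = -(dot w p - dot w q) / (dot v p - dot v q) := by
      have e1 : dot w (p - q) = dot w p - dot w q := by simp [dot, Prod.fst_sub, Prod.snd_sub]; ring
      have e2 : dot v (p - q) = dot v p - dot v q := by simp [dot, Prod.fst_sub, Prod.snd_sub]; ring
      rw [e1, e2] at hd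
      have hv' : dot v p - dot v q ≠ 0 := by rw [← e2]; exact hv
      field_simp
      linarith
    rw [hT]
    simp only [Finset.coe_image, Set.mem_image]
    exact ⟨(p, q), Finset.mem_coe.mpr
      (Finset.mem_product.mpr ⟨Finset.mem_coe.mp hp, Finset.mem_coe.mp hq⟩), this.symm⟩


lemma dot_add (x y p : Pt) : dot (x + y) p = dot x p + dot y p := by
  simp [dot, Prod.fst_add, Prod.snd_add]; ring

lemma dot_smul (c : ℝ) (x p : Pt) : dot (c • x) p = c * dot x p := by
  simp [dot, Prod.smul_fst, Prod.smul_snd]; ring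

lemma dot_neg (x p : Pt) : dot (-x) p = -dot x p := by
  simp [dot, Prod.fst_neg, Prod.snd_neg]; ring

lemma dot_perp_self (u : Pt) : dot (perp u) u = 0 := by simp [dot, perp]; ring

lemma dot_self_pos {u : Pt} (hu : u ≠ 0) : 0 < dot u u := by
  have := normsq_pos hu
  simpa [dot] using this

lemma rotation_cut (X : Finset Pt) (hgp : GenPos ↑X) (A B : Finset Pt)
    (hAX : A ⊆ X) (hBX : B ⊆ X) (hAB : Disjoint A B)
    (hAne : A.Nonempty) (hBne : B.Nonempty) (α β : ℕ) (hα : α < A.card) (hβle : β ≤ B.card)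
    (u₀ : Pt) (c₀ : ℝ) (hu₀ : u₀ ≠ 0)
    (hsepA : ∀ a ∈ A, dot u₀ a < c₀) (hsepB : ∀ b ∈ B, c₀ < dot u₀ b) :
    ∃ u : Pt, u ≠ 0 ∧ ∃ x : ℝ,
      (A.filter (fun p => dot u p < x)).card = α ∧
      (B.filter (fun p => dot u p < x)).card = β := by
  classical
  set S := A ∪ B with hS
  have hSne : S.Nonempty := ⟨hAne.choose, Finset.mem_union_left _ hAne.choose_spec⟩
  -- first perturbation
  have hAine : (A.image (dot u₀)).Nonempty := hAne.image _
  have hBine : (B.image (dot u₀)).Nonempty := hBne.image _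
  set δ := (B.image (dot u₀)).min' hBine - (A.image (dot u₀)).max' hAine with hδ
  have hδpos : 0 < δ := by
    rw [hδ]
    have h1 : (A.image (dot u₀)).max' hAine < c₀ := by
      obtain ⟨a, ha, hae⟩ := Finset.mem_image.mp ((A.image (dot u₀)).max'_mem hAine)
      rw [← hae]; exact hsepA a ha
    have h2 : c₀ < (B.image (dot u₀)).min' hBine := by
      obtain ⟨b, hb, hbe⟩ := Finset.mem_image.mp ((B.image (dot u₀)).min'_mem hBine)
      rw [← hbe]; exact hsepB b hb
    linarith
  set M := (S.image (fun p => |dot (perp u₀) p|)).max' (hSne.image (fun p => |dot (perp u₀) p|)) with hM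
  have hMb : ∀ p ∈ S, |dot (perp u₀) p| ≤ M := by
    intro p hp
    exact Finset.le_max' (S.image (fun p => |dot (perp u₀) p|)) _
      (Finset.mem_image_of_mem _ hp)
  have hM0 : 0 ≤ M := le_trans (abs_nonneg _) (hMb _ hSne.choose_spec)
  have hbnd : 0 < δ / (2 * M + 1) := by positivity
  obtain ⟨η, hη0, hηb, hηinj⟩ := perturb S u₀ hu₀ (perp u₀)
    (fun d h1 h2 => eq_zero_of_dot_eq_zero hu₀ h1 h2) _ hbnd
  set u₀' := u₀ + η • perp u₀ with hu₀'def
  have hdot₀' : ∀ p, dot u₀' p = dot u₀ p + η * dot (perp u₀) p := by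
    intro p; rw [hu₀'def, dot_add, dot_smul]
  have hu₀'ne : u₀' ≠ 0 := by
    intro h
    have h1 : dot u₀' u₀ = 0 := by rw [h]; simp [dot]
    rw [hdot₀' u₀, dot_perp_self, mul_zero, add_zero] at h1
    exact (dot_self_pos hu₀).ne' h1
  have hinj₀ : Set.InjOn (dot u₀') ↑S := by
    intro p hp q hq h
    apply hηinj hp hq
    simp only
    rw [← hdot₀', ← hdot₀', h]
  have hsep' : ∀ a ∈ A, ∀ b ∈ B, dot u₀' a < dot u₀' b := by
    intro a ha b hb
    have haS : a ∈ S := Finset.mem_union_left _ ha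
    have hbS : b ∈ S := Finset.mem_union_right _ hb
    have h1 : dot u₀ a ≤ (A.image (dot u₀)).max' hAine :=
      Finset.le_max' _ _ (Finset.mem_image_of_mem _ ha)
    have h2 : (B.image (dot u₀)).min' hBine ≤ dot u₀ b :=
      Finset.min'_le _ _ (Finset.mem_image_of_mem _ hb)
    have ha' := abs_le.mp (hMb a haS)
    have hb' := abs_le.mp (hMb b hbS)
    have hηM : η * (2 * M + 1) < δ := by
      rw [lt_div_iff₀ (by positivity)] at hηb
      linarith
    rw [hdot₀', hdot₀']
    nlinarith [hη0, hM0]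
  -- second perturbation
  have hAine' : (A.image (dot u₀')).Nonempty := hAne.image _
  have hBine' : (B.image (dot u₀')).Nonempty := hBne.image _
  set δ' := (B.image (dot u₀')).min' hBine' - (A.image (dot u₀')).max' hAine' with hδ'
  have hδ'pos : 0 < δ' := by
    rw [hδ']
    obtain ⟨a, ha, hae⟩ := Finset.mem_image.mp ((A.image (dot u₀')).max'_mem hAine')
    obtain ⟨b, hb, hbe⟩ := Finset.mem_image.mp ((B.image (dot u₀')).min'_mem hBine')
    rw [← hae, ← hbe]
    have := hsep' a ha b hb
    linarith
  set v := perp u₀' with hvdef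
  set M' := (S.image (fun p => |dot v p|)).max' (hSne.image (fun p => |dot v p|)) with hM'
  have hM'b : ∀ p ∈ S, |dot v p| ≤ M' := by
    intro p hp
    exact Finset.le_max' (S.image (fun p => |dot v p|)) _
      (Finset.mem_image_of_mem _ hp)
  have hM'0 : 0 ≤ M' := le_trans (abs_nonneg _) (hM'b _ hSne.choose_spec)
  have hbnd' : 0 < δ' / (2 * M' + 1) := by positivity
  have hzero' : ∀ d : Pt, dot (-u₀') d = 0 → dot v d = 0 → d = 0 := by
    intro d h1 h2
    rw [dot_neg, neg_eq_zero] at h1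
    exact eq_zero_of_dot_eq_zero hu₀'ne h1 h2
  obtain ⟨ε, hε0, hεb, hεinj⟩ := perturb S (-u₀') (by
      intro h; rw [neg_eq_zero] at h; exact hu₀'ne h) v hzero' _ hbnd'
  set u₁ := -u₀' + ε • v with hu₁def
  have hdot₁ : ∀ p, dot u₁ p = -dot u₀' p + ε * dot v p := by
    intro p; rw [hu₁def, dot_add, dot_smul, dot_neg]
  have hinj₁ : Set.InjOn (dot u₁) ↑S := by
    intro p hp q hq h
    apply hεinj hp hq
    simp only [dot_neg]
    have e1 := hdot₁ p
    have e2 := hdot₁ q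
    rw [← e1, ← e2, h]
  have hsep₁ : ∀ a ∈ A, ∀ b ∈ B, dot u₁ b < dot u₁ a := by
    intro a ha b hb
    have haS : a ∈ S := Finset.mem_union_left _ ha
    have hbS : b ∈ S := Finset.mem_union_right _ hb
    have h1 : dot u₀' a ≤ (A.image (dot u₀')).max' hAine' :=
      Finset.le_max' _ _ (Finset.mem_image_of_mem _ ha)
    have h2 : (B.image (dot u₀')).min' hBine' ≤ dot u₀' b :=
      Finset.min'_le _ _ (Finset.mem_image_of_mem _ hb)
    have ha' := abs_le.mp (hM'b a haS)
    have hb' := abs_le.mp (hM'b b hbS)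
    have hεM : ε * (2 * M' + 1) < δ' := by
      rw [lt_div_iff₀ (by positivity)] at hεb
      linarith
    rw [hdot₁, hdot₁]
    nlinarith [hε0, hM'0]
  -- the rotating path of directions
  set upath : ℝ → Pt := fun t => (1 - t) • u₀' + t • u₁ with hupath
  have hkey : ∀ t p, dot (upath t) p = (1 - t) * dot u₀' p + t * dot u₁ p := by
    intro t p
    rw [hupath]
    simp only
    rw [dot_add, dot_smul, dot_smul]
  have hpath0 : ∀ p, dot (upath 0) p = dot u₀' p := by
    intro p; rw [hkey]; ring
  have hpath1 : ∀ p, dot (upath 1) p = dot u₁ p := by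
    intro p; rw [hkey]; ring
  have hpath_ne : ∀ t, upath t ≠ 0 := by
    intro t h
    have h1 : dot (upath t) u₀' = 0 := by rw [h]; simp [dot]
    have h2 : dot (upath t) v = 0 := by rw [h]; simp [dot]
    rw [hkey] at h1 h2
    rw [hdot₁ u₀'] at h1
    rw [hdot₁ v] at h2
    have hvu : dot v u₀' = 0 := by rw [hvdef]; exact dot_perp_self u₀'
    have huv : dot u₀' v = 0 := by rw [dot_comm]; exact hvu
    rw [hvu] at h1
    rw [huv] at h2
    have hN : 0 < dot u₀' u₀' := dot_self_pos hu₀'ne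
    have hN' : 0 < dot v v := dot_self_pos (by
      rw [hvdef]
      intro hc
      apply hu₀'ne
      have c1 := congrArg Prod.fst hc
      have c2 := congrArg Prod.snd hc
      simp [perp] at c1 c2
      exact Prod.ext c2 c1)
    have ht : t = 1/2 := by
      rcases mul_eq_zero.mp (show (1 - 2*t) * dot u₀' u₀' = 0 by linarith [h1]; ) with h | h
      · linarith
      · exact absurd h hN.ne'
    rw [ht] at h2
    have : ε * dot v v = 0 := by linarith [h2]
    rcases mul_eq_zero.mp this with h | h
    · exact hε0.ne' h
    · exact hN'.ne' h
  -- the event set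
  set g : Pt × Pt → ℝ := fun pq =>
    if dot u₀' pq.1 - dot u₀' pq.2 = dot u₁ pq.1 - dot u₁ pq.2 then 2
    else (dot u₀' pq.1 - dot u₀' pq.2) /
      ((dot u₀' pq.1 - dot u₀' pq.2) - (dot u₁ pq.1 - dot u₁ pq.2)) with hg
  set E := (S ×ˢ S).image g with hE
  have hroot : ∀ p ∈ S, ∀ q ∈ S, p ≠ q → ∀ t, dot (upath t) p = dot (upath t) q → t ∈ E := by
    intro p hp q hq hne t ht
    rw [hkey, hkey] at ht
    set d0 := dot u₀' p - dot u₀' q with hd0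
    set d1 := dot u₁ p - dot u₁ q with hd1
    have hd0ne : d0 ≠ 0 := sub_ne_zero.mpr
      (fun hc => hne (hinj₀ (Finset.mem_coe.mpr hp) (Finset.mem_coe.mpr hq) hc))
    have heq : (1 - t) * d0 + t * d1 = 0 := by rw [hd0, hd1]; linear_combination ht
    by_cases hcase : d0 = d1
    · exfalso
      apply hd0ne
      rw [hcase] at heq
      linarith
    · have htval : t = d0 / (d0 - d1) := by
        have hsub : d0 - d1 ≠ 0 := sub_ne_zero.mpr hcase
        field_simp
        linarith
      rw [hE]
      apply Finset.mem_image.mpr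
      refine ⟨(p, q), Finset.mem_product.mpr ⟨hp, hq⟩, ?_⟩
      rw [hg]
      simp only
      rw [if_neg (by rw [← hd0, ← hd1]; exact hcase), ← hd0, ← hd1]
      exact htval.symm
  have hnotE : ∀ t : ℝ, (∀ pq : Pt × Pt, pq.1 ∈ S → pq.2 ∈ S → g pq ≠ t) → t ∉ E := by
    intro t hall ht
    rw [hE] at ht
    obtain ⟨pq, hpq, hgpq⟩ := Finset.mem_image.mp ht
    have := Finset.mem_product.mp hpq
    exact hall pq this.1 this.2 hgpq
  have h0E : (0:ℝ) ∉ E := by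
    apply hnotE
    intro pq hp hq
    rw [hg]
    simp only
    split
    · norm_num
    · next hcase =>
      intro hzero
      rcases div_eq_zero_iff.mp hzero with h | h
      · -- d0 = 0 means pq.1 = pq.2, but then d0 = d1, contradiction
        have : pq.1 = pq.2 := hinj₀ (Finset.mem_coe.mpr hp) (Finset.mem_coe.mpr hq)
          (by linarith [h])
        apply hcase
        rw [this]
        ring
      · exact (sub_ne_zero.mpr hcase) h
  have h1E : (1:ℝ) ∉ E := by
    apply hnotE
    intro pq hp hq
    rw [hg]
    simp only
    split
    · norm_num
    · next hcase =>
      intro hone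
      have hsub : (dot u₀' pq.1 - dot u₀' pq.2) - (dot u₁ pq.1 - dot u₁ pq.2) ≠ 0 :=
        sub_ne_zero.mpr hcase
      rw [div_eq_one_iff_eq hsub] at hone
      have hd1 : dot u₁ pq.1 - dot u₁ pq.2 = 0 := by linarith
      have : pq.1 = pq.2 := hinj₁ (Finset.mem_coe.mpr hp) (Finset.mem_coe.mpr hq)
        (by linarith)
      apply hcase
      rw [this]
      ring
  -- the counting function
  set FF : ℝ → ℕ := fun t => Fcnt (fun p => dot (upath t) p) A B α with hFF
  have hF0 : FF 0 = 0 := by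
    rw [hFF]
    simp only [Fcnt]
    rw [Finset.card_eq_zero, Finset.filter_eq_empty_iff]
    intro q hq
    have : cnt (fun p => dot (upath 0) p) A q = A.card := by
      rw [cnt]
      rw [Finset.filter_true_of_mem]
      intro a ha
      rw [hpath0, hpath0]
      exact hsep' a ha q hq
    omega
  have hF1 : FF 1 = B.card := by
    rw [hFF]
    simp only [Fcnt]
    rw [Finset.filter_true_of_mem]
    intro q hq
    have : cnt (fun p => dot (upath 1) p) A q = 0 := by
      rw [cnt, Finset.card_eq_zero, Finset.filter_eq_empty_iff]
      intro a ha
      rw [hpath1, hpath1]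
      exact not_lt.mpr (le_of_lt (hsep₁ a ha q hq))
    omega
  -- sign constancy across an interval
  have hsign_gen : ∀ a b : ℝ, a ≤ b → ∀ p ∈ S, ∀ q ∈ S, p ≠ q →
      (∀ t ∈ Icc a b, t ∈ E → dot (upath t) p ≠ dot (upath t) q) →
      (dot (upath a) p < dot (upath a) q ↔ dot (upath b) p < dot (upath b) q) := by
    intro a b hab p hp q hq hne hcov
    set f : ℝ → ℝ := fun t => dot (upath t) p - dot (upath t) q with hf
    have hfc : Continuous f := by
      have : f = fun t => (1 - t) * (dot u₀' p - dot u₀' q)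
          + t * (dot u₁ p - dot u₁ q) := by
        funext t
        rw [hf]
        simp only
        rw [hkey, hkey]
        ring
      rw [this]
      exact ((continuous_const.sub continuous_id).mul continuous_const).add
        (continuous_id.mul continuous_const)
    have hno : ∀ t ∈ Icc a b, f t ≠ 0 := by
      intro t ht hzero
      have hz : dot (upath t) p = dot (upath t) q := by
        have h' : dot (upath t) p - dot (upath t) q = 0 := hzero
        linarith
      exact hcov t ht (hroot p hp q hq hne t hz) hz
    have hiff := sign_const hfc hab hno
    have hfa : f a = dot (upath a) p - dot (upath a) q := rfl
    have hfb : f b = dot (upath b) p - dot (upath b) q := rfl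
    rw [hfa, hfb] at hiff
    constructor
    · intro h
      have := hiff.mp (by linarith)
      linarith
    · intro h
      have := hiff.mpr (by linarith)
      linarith
  -- chain step
  have hstep : ∀ s s', s < s' → s ∉ E → s' ∉ E →
      (E.filter (· ∈ Ioo s s')).card ≤ 1 → (FF s ≤ FF s' + 1 ∧ FF s' ≤ FF s + 1) := by
    intro s s' hss hsE hs'E hcard1
    set Ef := E.filter (· ∈ Ioo s s') with hEf
    set t₀ := if h : Ef.Nonempty then Ef.min' h else (s + s') / 2 with ht₀def
    have ht₀I : t₀ ∈ Ioo s s' := by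
      by_cases h : Ef.Nonempty
      · have h1 : t₀ = Ef.min' h := by rw [ht₀def, dif_pos h]
        have hmm := Ef.min'_mem h
        rw [h1]
        exact (Finset.mem_filter.mp hmm).2
      · have h1 : t₀ = (s + s') / 2 := by rw [ht₀def, dif_neg h]
        rw [h1]
        exact ⟨by linarith, by linarith⟩
    have hcovfull : ∀ t ∈ Icc s s', t ∈ E → t = t₀ := by
      intro t ht htE
      have htI : t ∈ Ioo s s' := by
        rcases eq_or_lt_of_le ht.1 with h1 | h1
        · exact absurd htE (h1 ▸ hsE)
        rcases eq_or_lt_of_le ht.2 with h2 | h2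
        · exact absurd htE (h2 ▸ hs'E)
        · exact ⟨h1, h2⟩
      have htf : t ∈ Ef := Finset.mem_filter.mpr ⟨htE, htI⟩
      have hne : Ef.Nonempty := ⟨t, htf⟩
      have ht₀f : t₀ ∈ Ef := by rw [ht₀def, dif_pos hne]; exact Ef.min'_mem hne
      have hc1 : Ef.card ≤ 1 := by rw [hEf]; exact hcard1
      exact Finset.card_le_one.mp hc1 t htf t₀ ht₀f
    have horder : ∀ p ∈ A ∪ B, ∀ q ∈ A ∪ B, p ≠ q →
        dot (upath t₀) p ≠ dot (upath t₀) q →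
        ((dot (upath s) p < dot (upath s) q ↔ dot (upath t₀) p < dot (upath t₀) q) ∧
         (dot (upath s') p < dot (upath s') q ↔ dot (upath t₀) p < dot (upath t₀) q)) := by
      intro p hp q hq hne hd
      have hcovL : ∀ t ∈ Icc s t₀, t ∈ E → dot (upath t) p ≠ dot (upath t) q := by
        intro t ht htE
        have heq : t = t₀ := hcovfull t ⟨ht.1, le_trans ht.2 (le_of_lt ht₀I.2)⟩ htE
        rw [heq]; exact hd
      have hcovR : ∀ t ∈ Icc t₀ s', t ∈ E → dot (upath t) p ≠ dot (upath t) q := by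
        intro t ht htE
        have heq : t = t₀ := hcovfull t ⟨le_trans (le_of_lt ht₀I.1) ht.1, ht.2⟩ htE
        rw [heq]; exact hd
      exact ⟨hsign_gen s t₀ (le_of_lt ht₀I.1) p hp q hq hne hcovL,
        (hsign_gen t₀ s' (le_of_lt ht₀I.2) p hp q hq hne hcovR).symm⟩
    constructor
    · exact deltaF X hgp A B hAX hBX hAB _ _ (upath t₀) (hpath_ne t₀) horder α
    · exact deltaF X hgp A B hAX hBX hAB _ _ (upath t₀) (hpath_ne t₀)
        (fun p hp q hq hne hd => ⟨(horder p hp q hq hne hd).2, (horder p hp q hq hne hd).1⟩) α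
  obtain ⟨ts, htsE, htsF⟩ := chain E FF hstep ((E.filter (· ∈ Ioo 0 1)).card) 0 1
    one_pos h0E h1E rfl β (Or.inl ⟨by rw [hF0]; omega, by rw [hF1]; exact hβle⟩)
  have hinjS : ∀ p ∈ S, ∀ q ∈ S, p ≠ q → dot (upath ts) p ≠ dot (upath ts) q := by
    intro p hp q hq hne h
    exact htsE (hroot p hp q hq hne ts h)
  have hinjS' : Set.InjOn (fun p => dot (upath ts) p) ↑S := by
    intro p hp q hq h
    by_contra hne
    exact hinjS p (Finset.mem_coe.mp hp) q (Finset.mem_coe.mp hq) hne h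
  set keyt : Pt → ℝ := fun p => dot (upath ts) p with hkeyt
  have hAS : (↑A : Set Pt) ⊆ ↑S := by
    intro p hp
    exact Finset.mem_coe.mpr (Finset.mem_union_left _ (Finset.mem_coe.mp hp))
  have hcardkeys : (A.image keyt).card = A.card :=
    Finset.card_image_of_injOn (hinjS'.mono hAS)
  obtain ⟨x, hxmem, hxcount⟩ := exists_pivot α (A.image keyt) (by rw [hcardkeys]; exact hα)
  obtain ⟨astar, hastar, hax⟩ := Finset.mem_image.mp hxmem
  have hfilA : (A.image keyt).filter (· < x) = (A.filter (fun p => keyt p < x)).image keyt :=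
    Finset.filter_image
  have hcountA : (A.filter (fun p => keyt p < x)).card = α := by
    rw [← hxcount, hfilA]
    exact (Finset.card_image_of_injOn (hinjS'.mono
      (Set.Subset.trans (Finset.coe_subset.mpr (Finset.filter_subset _ _)) hAS))).symm
  have haxS : astar ∈ S := Finset.mem_union_left _ hastar
  have hiffq : ∀ q ∈ B, (cnt keyt A q ≤ α ↔ keyt q < x) := by
    intro q hq
    have hqS : q ∈ S := Finset.mem_union_right _ hq
    have hqa : q ≠ astar := by
      intro h
      exact Finset.disjoint_left.mp hAB hastar (h ▸ hq)
    have hqx : keyt q ≠ x := by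
      rw [← hax]
      exact fun h => hqa (hinjS' (Finset.mem_coe.mpr hqS) (Finset.mem_coe.mpr haxS) h)
    constructor
    · intro hcnt
      by_contra hge
      have hgt : x < keyt q := lt_of_le_of_ne (not_lt.mp hge) (Ne.symm hqx)
      have hsub : insert astar (A.filter (fun p => keyt p < x))
          ⊆ A.filter (fun a => keyt a < keyt q) := by
        intro a ha
        rcases Finset.mem_insert.mp ha with rfl | ha'
        · exact Finset.mem_filter.mpr ⟨hastar, by rw [hax]; exact hgt⟩
        · have hmm := Finset.mem_filter.mp ha'
          exact Finset.mem_filter.mpr ⟨hmm.1, lt_trans hmm.2 hgt⟩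
      have hc : α + 1 ≤ (A.filter (fun a => keyt a < keyt q)).card := by
        have hle := Finset.card_le_card hsub
        rwa [Finset.card_insert_of_notMem (by simp [hax]), hcountA] at hle
      rw [cnt] at hcnt
      omega
    · intro hlt
      rw [cnt]
      have hsub : A.filter (fun a => keyt a < keyt q) ⊆ A.filter (fun p => keyt p < x) := by
        intro a ha
        have hmm := Finset.mem_filter.mp ha
        exact Finset.mem_filter.mpr ⟨hmm.1, lt_trans hmm.2 hlt⟩
      calc (A.filter (fun a => keyt a < keyt q)).card
          ≤ (A.filter (fun p => keyt p < x)).card := Finset.card_le_card hsub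
        _ = α := hcountA
  have hcountB : (B.filter (fun p => keyt p < x)).card = β := by
    rw [← htsF, hFF]
    simp only [Fcnt]
    congr 1
    apply Finset.filter_congr
    intro q hq
    exact (hiffq q hq).symm
  exact ⟨upath ts, hpath_ne ts, x, hcountA, hcountB⟩




/-- exact cut for a single set via a generic direction -/
lemma single_pivot (X S : Finset Pt) (hSX : S ⊆ X) (u : Pt) (hinj : Set.InjOn (dot u) ↑X)
    (γ : ℕ) (hγ : γ ≤ S.card) :
    ∃ x : ℝ, (S.filter (fun p => dot u p < x)).card = γ := by
  classical
  have hinjS : Set.InjOn (dot u) ↑S := hinj.mono (Finset.coe_subset.mpr hSX)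
  have hcard : (S.image (dot u)).card = S.card := Finset.card_image_of_injOn hinjS
  rcases eq_or_lt_of_le hγ with heq | hlt
  · -- γ = S.card : take x above everything
    rcases Finset.eq_empty_or_nonempty S with rfl | hne
    · exact ⟨0, by simp [← heq]⟩
    · set x := (S.image (dot u)).max' (hne.image _) + 1 with hx
      refine ⟨x, ?_⟩
      rw [heq]
      congr 1
      rw [Finset.filter_true_of_mem]
      intro p hp
      have : dot u p ≤ (S.image (dot u)).max' (hne.image _) :=
        Finset.le_max' _ _ (Finset.mem_image_of_mem _ hp)
      rw [hx]
      linarith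
  · obtain ⟨x, hxmem, hxcount⟩ := exists_pivot γ (S.image (dot u)) (by rw [hcard]; exact hlt)
    refine ⟨x, ?_⟩
    rw [← hxcount, Finset.filter_image]
    exact (Finset.card_image_of_injOn (hinjS.mono
      (Finset.coe_subset.mpr (Finset.filter_subset _ _)))).symm

lemma gcut (X : Finset Pt) (hgp : GenPos ↑X) (A B : Finset Pt)
    (hAX : A ⊆ X) (hBX : B ⊆ X) (hAB : Disjoint A B) (α β : ℕ)
    (hαle : α ≤ A.card) (hβle : β ≤ B.card)
    (hα : A.Nonempty → α < A.card) (hβ : B.Nonempty → β < B.card)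
    (hsep : A.Nonempty → B.Nonempty → ∃ u₀ : Pt, ∃ c₀ : ℝ, u₀ ≠ 0 ∧
      (∀ a ∈ A, dot u₀ a < c₀) ∧ (∀ b ∈ B, c₀ < dot u₀ b))
    (F : Finset (Set Pt)) :
    ∃ u : Pt, ∃ s : ℝ, u ≠ 0 ∧ (∀ p ∈ X, dot u p ≠ s) ∧
      (A.filter (fun p => dot u p < s)).card = α ∧
      (B.filter (fun p => dot u p < s)).card = β ∧ lineOf u s ∉ F := by
  classical
  rcases Finset.eq_empty_or_nonempty A with rfl | hAne
  · have hα0 : α = 0 := by simpa using hαle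
    obtain ⟨u, hu, hinj⟩ := exists_inj_dir X
    obtain ⟨x, hcB⟩ := single_pivot X B hBX u hinj β hβle
    obtain ⟨s, h1, h2, h3, h4⟩ := threshold X ∅ B u hu x α β (by simp [hα0]) hcB F
    exact ⟨u, s, hu, h1, h2, h3, h4⟩
  · rcases Finset.eq_empty_or_nonempty B with rfl | hBne
    · have hβ0 : β = 0 := by simpa using hβle
      obtain ⟨u, hu, hinj⟩ := exists_inj_dir X
      obtain ⟨x, hcA⟩ := single_pivot X A hAX u hinj α hαle
      obtain ⟨s, h1, h2, h3, h4⟩ := threshold X A ∅ u hu x α β hcA (by simp [hβ0]) F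
      exact ⟨u, s, hu, h1, h2, h3, h4⟩
    · obtain ⟨u₀, c₀, hu₀, hsA, hsB⟩ := hsep hAne hBne
      obtain ⟨u, hu, x, hcA, hcB⟩ := rotation_cut X hgp A B hAX hBX hAB hAne hBne
        α β (hα hAne) hβle u₀ c₀ hu₀ hsA hsB
      obtain ⟨s, h1, h2, h3, h4⟩ := threshold X A B u hu x α β hcA hcB F
      exact ⟨u, s, hu, h1, h2, h3, h4⟩


def SepBy (uc : Pt × ℝ) (p q : Pt) : Prop :=
  (dot uc.1 p < uc.2 ∧ uc.2 < dot uc.1 q) ∨ (dot uc.1 q < uc.2 ∧ uc.2 < dot uc.1 p)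

def NoSep (Lf : List (Pt × ℝ)) (p q : Pt) : Prop := ∀ uc ∈ Lf, ¬ SepBy uc p q

lemma noSep_tail {uc : Pt × ℝ} {Lf : List (Pt × ℝ)} {p q : Pt}
    (h : NoSep (uc :: Lf) p q) : NoSep Lf p q :=
  fun w hw => h w (List.mem_cons_of_mem uc hw)

lemma noSep_head {uc : Pt × ℝ} {Lf : List (Pt × ℝ)} {p q : Pt}
    (h : NoSep (uc :: Lf) p q) : ¬ SepBy uc p q :=
  h uc (List.mem_cons_self)

lemma side_bound (Hh : ℕ) (u : Pt) (s : ℝ) (Lf' : List (Pt × ℝ)) (S : Finset Pt)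
    (hne : ∀ q ∈ S, dot u q ≠ s)
    (γ : ℕ) (hγ : (S.filter (fun q => dot u q < s)).card = γ)
    (h1 : γ ≤ Hh) (h2 : S.card - γ ≤ Hh) :
    ∀ p ∈ S, (S.filter (fun q => NoSep ((u,s) :: Lf') p q)).card ≤ Hh := by
  intro p hp
  by_cases hps : dot u p < s
  · have hsub : S.filter (fun q => NoSep ((u,s)::Lf') p q)
        ⊆ S.filter (fun q => dot u q < s) := by
      intro q hq
      have hm := Finset.mem_filter.mp hq
      refine Finset.mem_filter.mpr ⟨hm.1, ?_⟩
      by_contra hc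
      have hgt : s < dot u q := lt_of_le_of_ne (not_lt.mp hc) (Ne.symm (hne q hm.1))
      exact noSep_head hm.2 (Or.inl ⟨hps, hgt⟩)
    calc (S.filter (fun q => NoSep ((u,s)::Lf') p q)).card
        ≤ (S.filter (fun q => dot u q < s)).card := Finset.card_le_card hsub
      _ = γ := hγ
      _ ≤ Hh := h1
  · have hsub : S.filter (fun q => NoSep ((u,s)::Lf') p q)
        ⊆ S.filter (fun q => ¬ dot u q < s) := by
      intro q hq
      have hm := Finset.mem_filter.mp hq
      refine Finset.mem_filter.mpr ⟨hm.1, ?_⟩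
      intro hlt
      have hgt : s < dot u p := lt_of_le_of_ne (not_lt.mp hps) (Ne.symm (hne p hp))
      exact noSep_head hm.2 (Or.inr ⟨hlt, hgt⟩)
    have hadd := Finset.card_filter_add_card_filter_not
      (s := S) (p := fun q => dot u q < s)
    calc (S.filter (fun q => NoSep ((u,s)::Lf') p q)).card
        ≤ (S.filter (fun q => ¬ dot u q < s)).card := Finset.card_le_card hsub
      _ ≤ Hh := by omega

lemma rec_lines (Hh : ℕ) (hH : 1 ≤ Hh) (X : Finset Pt) (hgp : GenPos ↑X) :
    ∀ (k : ℕ) (C R : Finset Pt), C ⊆ X → R ⊆ X → Disjoint C R →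
    C.card ≤ 2 * Hh → R.card ≤ 2 * Hh * k → (k = 0 → C = ∅) →
    (C.Nonempty → R.Nonempty → ∃ u₀ : Pt, ∃ c₀ : ℝ, u₀ ≠ 0 ∧
      (∀ a ∈ C, dot u₀ a < c₀) ∧ (∀ b ∈ R, c₀ < dot u₀ b)) →
    ∀ (F : Finset (Set Pt)),
    ∃ Lf : List (Pt × ℝ),
      Lf.length = k ∧
      (Lf.map (fun uc => lineOf uc.1 uc.2)).Nodup ∧
      (∀ uc ∈ Lf, lineOf uc.1 uc.2 ∉ F) ∧
      (∀ uc ∈ Lf, uc.1 ≠ 0 ∧ (∀ p ∈ X, dot uc.1 p ≠ uc.2)) ∧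
      (∀ p ∈ C, (C.filter (fun q => NoSep Lf p q)).card ≤ Hh) ∧
      (∀ p ∈ R, (R.filter (fun q => NoSep Lf p q)).card ≤ Hh) := by
  intro k
  induction k with
  | zero =>
    intro C R hCX hRX hCR hCcard hRcard hk0 hsep F
    have hC : C = ∅ := hk0 rfl
    have hR : R = ∅ := Finset.card_eq_zero.mp (by omega)
    refine ⟨[], rfl, List.nodup_nil, by simp, by simp, ?_, ?_⟩
    · intro p hp; rw [hC] at hp; exact absurd hp (Finset.notMem_empty p)
    · intro p hp; rw [hR] at hp; exact absurd hp (Finset.notMem_empty p)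
  | succ k ih =>
    intro C R hCX hRX hCR hCcard hRcard hk0 hsep F
    set α := C.card - min C.card Hh with hα
    have hαle : α ≤ C.card := by omega
    have hαlt : C.Nonempty → α < C.card := by
      intro h
      have := Finset.card_pos.mpr h
      omega
    have hαH : α ≤ Hh := by omega
    have hαH' : C.card - α ≤ Hh := by omega
    by_cases hcase : R.card ≤ 2 * Hh
    · -- final double cut, then padding
      set β := R.card - min R.card Hh with hβ
      have hβle : β ≤ R.card := by omega
      have hβlt : R.Nonempty → β < R.card := by
        intro h
        have := Finset.card_pos.mpr h
        omega
      obtain ⟨u, s, hu, havoid, hcA, hcB, hlF⟩ := gcut X hgp C R hCX hRX hCR α β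
        hαle hβle hαlt hβlt hsep F
      obtain ⟨Lf', hlen', hnodup', hF', hlines', _, _⟩ := ih ∅ ∅
        (Finset.empty_subset X) (Finset.empty_subset X) (by simp)
        (by simp) (by simp) (fun _ => rfl)
        (fun h _ => absurd h (by simp))
        (insert (lineOf u s) F)
      refine ⟨(u, s) :: Lf', by simp [hlen'], ?_, ?_, ?_, ?_, ?_⟩
      · rw [List.map_cons, List.nodup_cons]
        refine ⟨?_, hnodup'⟩
        intro hmem
        obtain ⟨uc, hucmem, huceq⟩ := List.mem_map.mp hmem
        exact hF' uc hucmem (huceq ▸ Finset.mem_insert_self _ _)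
      · intro uc hmem
        rcases List.mem_cons.mp hmem with rfl | h
        · exact hlF
        · exact fun hmF => hF' uc h (Finset.mem_insert_of_mem hmF)
      · intro uc hmem
        rcases List.mem_cons.mp hmem with rfl | h
        · exact ⟨hu, havoid⟩
        · exact hlines' uc h
      · exact side_bound Hh u s Lf' C (fun q hq => havoid q (hCX hq)) α hcA hαH hαH'
      · exact side_bound Hh u s Lf' R (fun q hq => havoid q (hRX hq)) β hcB
          (by omega) (by omega)
    · -- carve a chunk of 2*Hh and recurse
      have hβle : 2 * Hh ≤ R.card := by omega
      have hβlt : R.Nonempty → 2 * Hh < R.card := fun _ => by omega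
      obtain ⟨u, s, hu, havoid, hcA, hcB, hlF⟩ := gcut X hgp C R hCX hRX hCR α (2 * Hh)
        hαle hβle hαlt hβlt hsep F
      set C' := R.filter (fun q => dot u q < s) with hC'
      set R' := R.filter (fun q => ¬ dot u q < s) with hR'
      have hC'X : C' ⊆ X := Finset.Subset.trans (Finset.filter_subset _ _) hRX
      have hR'X : R' ⊆ X := Finset.Subset.trans (Finset.filter_subset _ _) hRX
      have hC'R' : Disjoint C' R' := by
        rw [Finset.disjoint_left]
        intro q hq1 hq2
        rw [hC', Finset.mem_filter] at hq1
        rw [hR', Finset.mem_filter] at hq2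
        exact hq2.2 hq1.2
      have hadd := Finset.card_filter_add_card_filter_not
        (s := R) (p := fun q => dot u q < s)
      have hC'card : C'.card = 2 * Hh := hcB
      have hR'card : R'.card ≤ 2 * Hh * k := by
        have h1 : C'.card + R'.card = R.card := hadd
        have h2 : C'.card = 2 * Hh := hcB
        have hmul : 2 * Hh * (k + 1) = 2 * Hh * k + 2 * Hh := by ring
        omega
      have hRgt : ∀ b ∈ R', s < dot u b := by
        intro b hb
        rw [hR', Finset.mem_filter] at hb
        exact lt_of_le_of_ne (not_lt.mp hb.2) (Ne.symm (havoid b (hRX hb.1)))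
      obtain ⟨Lf', hlen', hnodup', hF', hlines', hrecC, hrecR⟩ := ih C' R'
        hC'X hR'X hC'R' (le_of_eq hC'card) hR'card
        (fun hk => absurd (show R.card ≤ 2 * Hh by simp [hk] at hRcard; omega) hcase)
        (fun _ _ => ⟨u, s, hu, fun a ha => (Finset.mem_filter.mp ha).2, hRgt⟩)
        (insert (lineOf u s) F)
      refine ⟨(u, s) :: Lf', by simp [hlen'], ?_, ?_, ?_, ?_, ?_⟩
      · rw [List.map_cons, List.nodup_cons]
        refine ⟨?_, hnodup'⟩
        intro hmem
        obtain ⟨uc, hucmem, huceq⟩ := List.mem_map.mp hmem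
        exact hF' uc hucmem (huceq ▸ Finset.mem_insert_self _ _)
      · intro uc hmem
        rcases List.mem_cons.mp hmem with rfl | h
        · exact hlF
        · exact fun hmF => hF' uc h (Finset.mem_insert_of_mem hmF)
      · intro uc hmem
        rcases List.mem_cons.mp hmem with rfl | h
        · exact ⟨hu, havoid⟩
        · exact hlines' uc h
      · exact side_bound Hh u s Lf' C (fun q hq => havoid q (hCX hq)) α hcA hαH hαH'
      · intro p hp
        by_cases hps : dot u p < s
        · have hpC' : p ∈ C' := by rw [hC']; exact Finset.mem_filter.mpr ⟨hp, hps⟩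
          have hsub : R.filter (fun q => NoSep ((u,s)::Lf') p q)
              ⊆ C'.filter (fun q => NoSep Lf' p q) := by
            intro q hq
            have hm := Finset.mem_filter.mp hq
            have hqlt : dot u q < s := by
              by_contra hc
              exact noSep_head hm.2 (Or.inl ⟨hps,
                lt_of_le_of_ne (not_lt.mp hc) (Ne.symm (havoid q (hRX hm.1)))⟩)
            refine Finset.mem_filter.mpr ⟨?_, noSep_tail hm.2⟩
            rw [hC']
            exact Finset.mem_filter.mpr ⟨hm.1, hqlt⟩
          calc (R.filter (fun q => NoSep ((u,s)::Lf') p q)).card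
              ≤ (C'.filter (fun q => NoSep Lf' p q)).card := Finset.card_le_card hsub
            _ ≤ Hh := hrecC p hpC'
        · have hgt : s < dot u p := lt_of_le_of_ne (not_lt.mp hps) (Ne.symm (havoid p (hRX hp)))
          have hpR' : p ∈ R' := by rw [hR']; exact Finset.mem_filter.mpr ⟨hp, hps⟩
          have hsub : R.filter (fun q => NoSep ((u,s)::Lf') p q)
              ⊆ R'.filter (fun q => NoSep Lf' p q) := by
            intro q hq
            have hm := Finset.mem_filter.mp hq
            have hqge : ¬ dot u q < s := by
              intro hlt
              exact noSep_head hm.2 (Or.inr ⟨hlt, hgt⟩)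
            refine Finset.mem_filter.mpr ⟨?_, noSep_tail hm.2⟩
            rw [hR']
            exact Finset.mem_filter.mpr ⟨hm.1, hqge⟩
          calc (R.filter (fun q => NoSep ((u,s)::Lf') p q)).card
              ≤ (R'.filter (fun q => NoSep Lf' p q)).card := Finset.card_le_card hsub
            _ ≤ Hh := hrecR p hpR'

end Stmt1

open Stmt1 in
/-- Theorem 2.2. -/
theorem stmt_1 (X : Finset Pt) (N : ℕ) (hN : X.card = N) (hgp : GenPos ↑X)
    (H K : ℕ) (hH : 1 ≤ H) (hK : ⌈(N : ℝ) / (2 * H)⌉ ≤ (K : ℤ)) :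
    ∃ L : Finset (Set Pt), L.card = K ∧
      (∀ l ∈ L, IsAffLine l ∧ Disjoint l (↑X : Set Pt)) ∧
      ∀ cell, IsCell ↑L cell → ((↑X : Set Pt) ∩ cell).ncard ≤ H := by
  classical
  have h2H : (0:ℝ) < 2 * (H:ℝ) := by
    have : (1:ℝ) ≤ (H:ℝ) := by exact_mod_cast hH
    linarith
  have h1 : (N:ℝ) / (2 * (H:ℝ)) ≤ (K:ℝ) := by
    have hceil := Int.le_ceil ((N:ℝ) / (2 * (H:ℝ)))
    have h2 : ((⌈(N:ℝ)/(2*(H:ℝ))⌉ : ℤ) : ℝ) ≤ ((K:ℤ) : ℝ) := by exact_mod_cast hK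
    push_cast at h2
    linarith
  have hNle : X.card ≤ 2 * H * K := by
    rw [hN]
    have h2 : (N:ℝ) ≤ (K:ℝ) * (2*(H:ℝ)) := (div_le_iff₀ h2H).mp h1
    have h3 : (N:ℝ) ≤ ((2*H*K : ℕ) : ℝ) := by push_cast; linarith
    exact_mod_cast h3
  obtain ⟨Lf, hlen, hnodup, _, hlines, _, hbound⟩ := rec_lines H hH X hgp K ∅ X
    (Finset.empty_subset X) (Finset.Subset.refl X) (by simp)
    (by simp) hNle (fun _ => rfl) (fun h _ => absurd h (by simp)) ∅
  refine ⟨(Lf.map (fun uc => lineOf uc.1 uc.2)).toFinset, ?_, ?_, ?_⟩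
  · rw [List.toFinset_card_of_nodup hnodup, List.length_map, hlen]
  · intro l hl
    obtain ⟨uc, hucmem, rfl⟩ := List.mem_map.mp (List.mem_toFinset.mp hl)
    obtain ⟨hu, havoid⟩ := hlines uc hucmem
    constructor
    · exact ⟨uc.1.1, uc.1.2, uc.2, (ne_zero_iff uc.1).mp hu, rfl⟩
    · rw [Set.disjoint_left]
      intro p hpl hpX
      exact havoid p (Finset.mem_coe.mp hpX) hpl
  · intro cell hcell
    obtain ⟨p₀, hp₀, rfl⟩ := hcell
    set L := (Lf.map (fun uc => lineOf uc.1 uc.2)).toFinset with hL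
    set V := (⋃₀ (↑L : Set (Set Pt)))ᶜ with hV
    set cell := connectedComponentIn V p₀ with hcell
    rcases Set.eq_empty_or_nonempty ((↑X : Set Pt) ∩ cell) with he | ⟨p, hpX, hpcell⟩
    · rw [he]
      simp
    · have hsubV : cell ⊆ V := connectedComponentIn_subset _ _
      have hpre : IsPreconnected cell := isPreconnected_connectedComponentIn
      have hpXf : p ∈ X := Finset.mem_coe.mp hpX
      have hsub2 : (↑X : Set Pt) ∩ cell ⊆ ↑(X.filter (fun q => NoSep Lf p q)) := by
        rintro q ⟨hqX, hqcell⟩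
        rw [Finset.mem_coe, Finset.mem_filter]
        refine ⟨Finset.mem_coe.mp hqX, ?_⟩
        intro uc hucmem hsepby
        have hlL : lineOf uc.1 uc.2 ∈ L := by
          rw [hL]
          exact List.mem_toFinset.mpr (List.mem_map_of_mem hucmem)
        have hcl : ∀ r ∈ cell, dot uc.1 r ≠ uc.2 := by
          intro r hr hrl
          exact (hsubV hr) (Set.mem_sUnion.mpr ⟨lineOf uc.1 uc.2, Finset.mem_coe.mpr hlL, hrl⟩)
        have hdotc : Continuous (fun r : Pt => dot uc.1 r) :=
          (continuous_const.mul continuous_fst).add (continuous_const.mul continuous_snd)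
        have hU1 : IsOpen {r : Pt | dot uc.1 r < uc.2} := isOpen_lt hdotc continuous_const
        have hU2 : IsOpen {r : Pt | uc.2 < dot uc.1 r} := isOpen_lt continuous_const hdotc
        have hcover : cell ⊆ {r : Pt | dot uc.1 r < uc.2} ∪ {r : Pt | uc.2 < dot uc.1 r} := by
          intro r hr
          rcases lt_or_gt_of_ne (hcl r hr) with h | h
          · exact Or.inl h
          · exact Or.inr h
        have hkill : ∀ a b : Pt, a ∈ cell → b ∈ cell →
            dot uc.1 a < uc.2 → uc.2 < dot uc.1 b → False := by
          intro a b ha hb h1 h2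
          obtain ⟨r, hr⟩ := hpre {r : Pt | dot uc.1 r < uc.2} {r : Pt | uc.2 < dot uc.1 r}
            hU1 hU2 hcover ⟨a, ha, h1⟩ ⟨b, hb, h2⟩
          have hx1 := hr.2.1
          have hx2 := hr.2.2
          simp only [Set.mem_setOf_eq] at hx1 hx2
          linarith
        rcases hsepby with ⟨h1, h2⟩ | ⟨h1, h2⟩
        · exact hkill p q hpcell hqcell h1 h2
        · exact hkill q p hqcell hpcell h1 h2
      calc ((↑X : Set Pt) ∩ cell).ncard
          ≤ (X.filter (fun q => NoSep Lf p q)).card := by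
            have hfin : (↑(X.filter (fun q => NoSep Lf p q)) : Set Pt).Finite :=
              Finset.finite_toSet _
            have := Set.ncard_le_ncard hsub2 hfin
            rwa [Set.ncard_coe_finset] at this
        _ ≤ H := hbound p hpXf
end

section
/- Let X be a finite set of N points in ℝ² in general position and let K ≥ 1 be an integer. Then there exists a set L of K distinct affine lines in ℝ², each disjoint from X, such that every cell of L contains at most ⌈N/(2K)⌉ points of X. -/
open Set

namespace Stmt2Aux

open scoped Classical

/-- a line given by coefficients (α, β, γ) : αx + βy = γ -/
abbrev LineT := ℝ × ℝ × ℝ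

def lval (l : LineT) (p : Pt) : ℝ := l.1 * p.1 + l.2.1 * p.2 - l.2.2

def Nondeg (l : LineT) : Prop := l.1 ≠ 0 ∨ l.2.1 ≠ 0

def lset (l : LineT) : Set Pt := {p | lval l p = 0}

lemma lset_eq (l : LineT) : lset l = {p : Pt | l.1 * p.1 + l.2.1 * p.2 = l.2.2} := by
  ext p; simp [lset, lval, sub_eq_zero]

lemma sumsq_pos {α β : ℝ} (h : α ≠ 0 ∨ β ≠ 0) : 0 < α^2 + β^2 := by
  rcases h with h | h
  · positivity
  · positivity

/-- three distinct points on a line are collinear -/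
lemma collinear_of_lset {l : LineT} (hl : Nondeg l) {p q r : Pt}
    (hp : p ∈ lset l) (hq : q ∈ lset l) (hr : r ∈ lset l) :
    Collinear ℝ ({p, q, r} : Set Pt) := by
  obtain ⟨α, β, γ⟩ := l
  have hd : (0:ℝ) < α^2 + β^2 := sumsq_pos hl
  rw [collinear_iff_of_mem (Set.mem_insert p {q, r})]
  refine ⟨(-β, α), ?_⟩
  intro u hu
  have hul : lval (α, β, γ) u = 0 := by
    rcases hu with h | h | h
    · subst h; exact hp
    · subst h; exact hq
    · simp only [Set.mem_singleton_iff] at h; subst h; exact hr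
  set t : ℝ := (-β*(u.1-p.1) + α*(u.2-p.2))/(α^2+β^2) with ht
  refine ⟨t, ?_⟩
  have h1 : α * (u.1 - p.1) + β * (u.2 - p.2) = 0 := by
    have h2 := hp; simp only [lset, lval, Set.mem_setOf_eq] at h2 hul; linarith
  have hco : t • ((-β, α) : Pt) +ᵥ p = (t * (-β) + p.1, t * α + p.2) := by
    rfl
  rw [hco]
  have hx : u.1 = t * (-β) + p.1 := by
    rw [ht]; field_simp; linear_combination α * h1
  have hy : u.2 = t * α + p.2 := by
    rw [ht]; field_simp; linear_combination β * h1
  exact Prod.ext hx hy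

/-- At most two points of a general-position set lie on a line. -/
lemma genpos_line (X : Finset Pt) (hgp : GenPos ↑X) {l : LineT} (hl : Nondeg l)
    {p q r : Pt} (hp : p ∈ X) (hq : q ∈ X) (hr : r ∈ X)
    (hpq : p ≠ q) (hpr : p ≠ r) (hqr : q ≠ r)
    (h1 : lval l p = 0) (h2 : lval l q = 0) (h3 : lval l r = 0) : False :=
  hgp p hp q hq r hr hpq hpr hqr (collinear_of_lset hl h1 h2 h3)

lemma lval_continuous (l : LineT) : Continuous (lval l) := by
  unfold lval; fun_prop

/-- Points of a preconnected set avoiding a line lie strictly on one side. -/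
lemma same_side_of_preconnected {l : LineT} {S : Set Pt}
    (hS : IsPreconnected S) (hdisj : ∀ p ∈ S, lval l p ≠ 0)
    {x y : Pt} (hx : x ∈ S) (hy : y ∈ S) : 0 < lval l x * lval l y := by
  have hsub : S ⊆ {p | lval l p < 0} ∪ {p | 0 < lval l p} := by
    intro p hp
    rcases lt_trichotomy (lval l p) 0 with h | h | h
    · exact Or.inl h
    · exact absurd h (hdisj p hp)
    · exact Or.inr h
  have hopen1 : IsOpen {p : Pt | lval l p < 0} := isOpen_lt (lval_continuous l) continuous_const
  have hopen2 : IsOpen {p : Pt | 0 < lval l p} := isOpen_lt continuous_const (lval_continuous l)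
  have hdis : Disjoint {p : Pt | lval l p < 0} {p : Pt | 0 < lval l p} := by
    rw [Set.disjoint_left]; intro a ha hb; simp only [Set.mem_setOf_eq] at ha hb; linarith
  rcases hS.subset_or_subset hopen1 hopen2 hdis hsub with h | h
  · exact mul_pos_of_neg_of_neg (h hx) (h hy)
  · exact mul_pos (h hx) (h hy)



lemma exists_between_notin (W : Finset ℝ) {a b : ℝ} (hab : a < b) :
    ∃ t, a < t ∧ t < b ∧ t ∉ W := by
  have hinf : (Set.Ioo a b).Infinite := Set.infinite_coe_iff.mp (Set.Ioo.infinite hab)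
  obtain ⟨t, ht, htW⟩ := hinf.exists_notMem_finset W
  exact ⟨t, ht.1, ht.2, htW⟩

lemma rank_card (V : Finset Pt) (wv : Pt → ℝ) (hinj : Set.InjOn wv ↑V) (n : ℕ) :
    (V.filter fun p => (V.filter fun r => wv r < wv p).card < n).card = min n V.card := by
  set rk : Pt → ℕ := fun p => (V.filter fun r => wv r < wv p).card with hrk
  have hmono : ∀ p ∈ V, ∀ q ∈ V, wv p < wv q → rk p < rk q := by
    intro p hp q hq hpq
    apply Finset.card_lt_card
    constructor
    · intro r hr
      rw [Finset.mem_filter] at hr ⊢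
      exact ⟨hr.1, lt_trans hr.2 hpq⟩
    · intro hsub
      have hpmem : p ∈ V.filter fun r => wv r < wv q := by
        rw [Finset.mem_filter]; exact ⟨hp, hpq⟩
      have := hsub hpmem
      rw [Finset.mem_filter] at this
      exact lt_irrefl _ this.2
  have hinjrk : Set.InjOn rk ↑V := by
    intro p hp q hq hpq
    by_contra hne
    rcases lt_or_gt_of_ne (fun h => hne (hinj hp hq h)) with h | h
    · exact absurd hpq (ne_of_lt (hmono p hp q hq h))
    · exact absurd hpq.symm (ne_of_lt (hmono q hq p hp h))
  have hlt : ∀ p ∈ V, rk p < V.card := by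
    intro p hp
    have hsub : (V.filter fun r => wv r < wv p) ⊆ V.erase p := by
      intro r hr
      rw [Finset.mem_filter] at hr
      exact Finset.mem_erase.mpr ⟨fun h => absurd (congrArg wv h) (ne_of_lt hr.2), hr.1⟩
    calc rk p ≤ (V.erase p).card := Finset.card_le_card hsub
    _ < V.card := Finset.card_erase_lt_of_mem hp
  have himg : V.image rk = Finset.range V.card := by
    apply Finset.eq_of_subset_of_card_le
    · intro x hx
      rw [Finset.mem_image] at hx
      obtain ⟨p, hp, rfl⟩ := hx
      exact Finset.mem_range.mpr (hlt p hp)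
    · rw [Finset.card_range, Finset.card_image_of_injOn hinjrk]
  have hfilt : (V.filter fun p => rk p < n).image rk = (V.image rk).filter (· < n) := by
    ext x
    simp only [Finset.mem_image, Finset.mem_filter]
    constructor
    · rintro ⟨p, ⟨hp, hpn⟩, rfl⟩
      exact ⟨⟨p, hp, rfl⟩, hpn⟩
    · rintro ⟨⟨p, hp, rfl⟩, hpn⟩
      exact ⟨p, ⟨hp, hpn⟩, rfl⟩
  have hc1 : (V.filter fun p => rk p < n).card = ((V.image rk).filter (· < n)).card := by
    rw [← hfilt]
    refine (Finset.card_image_of_injOn (hinjrk.mono ?_)).symm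
    intro x hx
    simp only [Finset.coe_filter, Set.mem_setOf_eq] at hx
    exact hx.1
  rw [hc1, himg]
  have : (Finset.range V.card).filter (· < n) = Finset.range (min n V.card) := by
    ext x; simp [Finset.mem_filter, Finset.mem_range, lt_min_iff, and_comm]
  rw [this, Finset.card_range]

lemma sel (X S Lo : Finset Pt) (wv : Pt → ℝ) (hS : S ⊆ X) (hLo : Lo ⊆ S)
    (hinj : Set.InjOn wv ↑X)
    (hdc : ∀ x ∈ Lo, ∀ y ∈ S, wv y < wv x → y ∈ Lo) :
    ∃ t : ℝ, (∀ x ∈ X, wv x ≠ t) ∧ S.filter (fun p => wv p < t) = Lo := by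
  by_cases hXe : X = ∅
  · refine ⟨0, by simp [hXe], ?_⟩
    have : S = ∅ := Finset.subset_empty.mp (hXe ▸ hS)
    subst this
    simp [Finset.subset_empty.mp hLo]
  have hXne : X.Nonempty := Finset.nonempty_iff_ne_empty.mpr hXe
  have hWne : (X.image wv).Nonempty := hXne.image wv
  by_cases hLoe : Lo = ∅
  · refine ⟨(X.image wv).min' hWne - 1, ?_, ?_⟩
    · intro x hx h
      have : (X.image wv).min' hWne ≤ wv x := Finset.min'_le _ _ (Finset.mem_image_of_mem wv hx)
      linarith
    · subst hLoe
      rw [Finset.filter_eq_empty_iff]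
      intro p hp
      have : (X.image wv).min' hWne ≤ wv p :=
        Finset.min'_le _ _ (Finset.mem_image_of_mem wv (hS hp))
      push_neg
      linarith
  by_cases hHie : S \ Lo = ∅
  · refine ⟨(X.image wv).max' hWne + 1, ?_, ?_⟩
    · intro x hx h
      have : wv x ≤ (X.image wv).max' hWne := Finset.le_max' _ _ (Finset.mem_image_of_mem wv hx)
      linarith
    · have hSL : S ⊆ Lo := by
        intro p hp
        by_contra hpl
        exact absurd (Finset.mem_sdiff.mpr ⟨hp, hpl⟩) (by simp [hHie])
      have : S.filter (fun p => wv p < (X.image wv).max' hWne + 1) = S := by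
        apply Finset.filter_true_of_mem
        intro p hp
        have : wv p ≤ (X.image wv).max' hWne :=
          Finset.le_max' _ _ (Finset.mem_image_of_mem wv (hS hp))
        linarith
      rw [this]
      exact Finset.Subset.antisymm hSL hLo
  -- both nonempty
  have hLone : Lo.Nonempty := Finset.nonempty_iff_ne_empty.mpr hLoe
  have hHine : (S \ Lo).Nonempty := Finset.nonempty_iff_ne_empty.mpr hHie
  have hLoI : (Lo.image wv).Nonempty := hLone.image wv
  have hHiI : ((S \ Lo).image wv).Nonempty := hHine.image wv
  set a := (Lo.image wv).max' hLoI with ha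
  set b := ((S \ Lo).image wv).min' hHiI with hb
  have hab : a < b := by
    obtain ⟨x, hx, hxa⟩ := Finset.mem_image.mp ((Lo.image wv).max'_mem hLoI)
    obtain ⟨y, hy, hyb⟩ := Finset.mem_image.mp (((S \ Lo).image wv).min'_mem hHiI)
    rcases Finset.mem_sdiff.mp hy with ⟨hyS, hyLo⟩
    have hxy : wv x < wv y := by
      rcases lt_trichotomy (wv x) (wv y) with h | h | h
      · exact h
      · exact absurd (hinj (hS (hLo hx)) (hS hyS) h) (by rintro rfl; exact hyLo hx)
      · exact absurd (hdc x hx y hyS h) hyLo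
    rw [ha, hb, ← hxa, ← hyb]
    exact hxy
  obtain ⟨t, hat, htb, htW⟩ := exists_between_notin (X.image wv) hab
  refine ⟨t, ?_, ?_⟩
  · intro x hx h
    exact htW (h ▸ Finset.mem_image_of_mem wv hx)
  · ext p
    rw [Finset.mem_filter]
    constructor
    · rintro ⟨hp, hpt⟩
      by_contra hpl
      have : b ≤ wv p :=
        Finset.min'_le _ _ (Finset.mem_image_of_mem wv (Finset.mem_sdiff.mpr ⟨hp, hpl⟩))
      linarith
    · intro hp
      refine ⟨hLo hp, ?_⟩
      have : wv p ≤ a := Finset.le_max' _ _ (Finset.mem_image_of_mem wv hp)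
      linarith


lemma staircase (g : ℝ → ℤ) (S : Finset ℝ)
    (Hc : ∀ u v : ℝ, u ≤ v → (∀ x ∈ S, x ∉ Set.Icc u v) → g u = g v)
    (Hj : ∀ u v : ℝ, u < v → u ∉ S → v ∉ S →
      (∀ x ∈ S, x ∈ Set.Ioo u v → ∀ y ∈ S, y ∈ Set.Ioo u v → x = y) →
      (g u - g v).natAbs ≤ 1) :
    ∀ (n : ℕ) (s₁ s₂ : ℝ), s₁ < s₂ → s₁ ∉ S → s₂ ∉ S →
      (S.filter (· ∈ Set.Ioo s₁ s₂)).card ≤ n →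
      ∀ c : ℤ, min (g s₁) (g s₂) ≤ c → c ≤ max (g s₁) (g s₂) →
      ∃ s, s ∉ S ∧ g s = c := by
  intro n
  induction n with
  | zero =>
    intro s₁ s₂ h12 h1 h2 hcard c hc1 hc2
    have hemp : ∀ x ∈ S, x ∉ Set.Icc s₁ s₂ := by
      intro x hx hmem
      rcases eq_or_lt_of_le hmem.1 with h | h
      · exact h1 (h ▸ hx)
      rcases eq_or_lt_of_le hmem.2 with h' | h'
      · exact h2 (h'.symm ▸ hx)
      have hm : x ∈ S.filter (· ∈ Set.Ioo s₁ s₂) := Finset.mem_filter.mpr ⟨hx, h, h'⟩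
      have := Finset.card_pos.mpr ⟨x, hm⟩
      omega
    have heq := Hc s₁ s₂ (le_of_lt h12) hemp
    refine ⟨s₁, h1, ?_⟩
    rw [heq] at hc1 ⊢
    omega
  | succ n ih =>
    intro s₁ s₂ h12 h1 h2 hcard c hc1 hc2
    by_cases hne : (S.filter (· ∈ Set.Ioo s₁ s₂)).Nonempty
    case neg =>
      -- no bad points inside: same as base case
      have hemp : ∀ x ∈ S, x ∉ Set.Icc s₁ s₂ := by
        intro x hx hmem
        rcases eq_or_lt_of_le hmem.1 with h | h
        · exact h1 (h ▸ hx)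
        rcases eq_or_lt_of_le hmem.2 with h' | h'
        · exact h2 (h'.symm ▸ hx)
        exact hne ⟨x, Finset.mem_filter.mpr ⟨hx, h, h'⟩⟩
      have heq := Hc s₁ s₂ (le_of_lt h12) hemp
      refine ⟨s₁, h1, ?_⟩
      rw [heq] at hc1 ⊢
      omega
    case pos =>
      set Φ := S.filter (· ∈ Set.Ioo s₁ s₂) with hΦ
      have hΦsub : ∀ x ∈ Φ, x ∈ S ∧ s₁ < x ∧ x < s₂ := by
        intro x hx
        have h := Finset.mem_filter.mp hx
        exact ⟨h.1, by simpa using h.2⟩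
      set x₀ := Φ.min' hne with hx₀def
      have hx₀m : x₀ ∈ Φ := Φ.min'_mem hne
      obtain ⟨hx₀S, hx₀1, hx₀2⟩ := hΦsub x₀ hx₀m
      obtain ⟨u, hu1, hu2, huS⟩ := exists_between_notin S hx₀1
      have hus₂ : u < s₂ := lt_trans hu2 hx₀2
      have hgu : g u = g s₁ := by
        refine (Hc s₁ u (le_of_lt hu1) ?_).symm
        intro x hx hmem
        rcases eq_or_lt_of_le hmem.1 with h | h
        · exact h1 (h ▸ hx)
        have hxΦ : x ∈ Φ := Finset.mem_filter.mpr
          ⟨hx, h, lt_of_le_of_lt hmem.2 hus₂⟩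
        have hle := Φ.min'_le x hxΦ
        rw [← hx₀def] at hle
        have := lt_of_le_of_lt hmem.2 hu2
        linarith
      -- pick v just after x₀ (before next bad point x₁, or before s₂)
      by_cases hTe : (Φ.erase x₀).Nonempty
      case pos =>
        set x₁ := (Φ.erase x₀).min' hTe with hx₁def
        have hx₁m : x₁ ∈ Φ.erase x₀ := Finset.min'_mem _ hTe
        have hx₁Φ : x₁ ∈ Φ := Finset.mem_of_mem_erase hx₁m
        obtain ⟨hx₁S, hx₁1, hx₁2⟩ := hΦsub x₁ hx₁Φ
        have h01 : x₀ < x₁ := by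
          have hle : x₀ ≤ x₁ := by
            have := Φ.min'_le x₁ hx₁Φ
            rw [← hx₀def] at this; exact this
          rcases lt_or_eq_of_le hle with h | h
          · exact h
          · exact absurd h.symm (Finset.ne_of_mem_erase hx₁m)
        obtain ⟨v, hv1, hv2, hvS⟩ := exists_between_notin S h01
        have huv : u < v := lt_trans hu2 hv1
        have honly : ∀ x ∈ S, x ∈ Set.Ioo u v → ∀ y ∈ S, y ∈ Set.Ioo u v → x = y := by
          have hone : ∀ x ∈ S, x ∈ Set.Ioo u v → x = x₀ := by
            intro x hx hmem
            have hxΦ : x ∈ Φ := Finset.mem_filter.mpr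
              ⟨hx, lt_trans hu1 hmem.1, lt_trans (lt_trans hmem.2 hv2) hx₁2⟩
            by_contra hne'
            have hxT : x ∈ Φ.erase x₀ := Finset.mem_erase.mpr ⟨hne', hxΦ⟩
            have := (Φ.erase x₀).min'_le x hxT
            rw [← hx₁def] at this
            have := hmem.2
            linarith
          intro x hx hmx y hy hmy
          rw [hone x hx hmx, hone y hy hmy]
        have hjump := Hj u v huv huS hvS honly
        -- recurse on [v, s₂]
        have hvs₂ : v < s₂ := lt_trans hv2 hx₁2
        have hsub : S.filter (· ∈ Set.Ioo v s₂) ⊆ Φ.erase x₀ := by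
          intro x hx
          have h := Finset.mem_filter.mp hx
          have hmem : x ∈ Set.Ioo v s₂ := by simpa using h.2
          refine Finset.mem_erase.mpr ⟨?_, Finset.mem_filter.mpr ⟨h.1, ?_, hmem.2⟩⟩
          · intro hq; rw [hq] at hmem; have := hmem.1; linarith
          · calc s₁ < u := hu1
            _ < v := huv
            _ < x := hmem.1
        have hcard' : (S.filter (· ∈ Set.Ioo v s₂)).card ≤ n := by
          have h1' : (Φ.erase x₀).card = Φ.card - 1 := Finset.card_erase_of_mem hx₀m
          have h2' := Finset.card_le_card hsub
          have h3' : 0 < Φ.card := Finset.card_pos.mpr hne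
          omega
        by_cases hcc : min (g v) (g s₂) ≤ c ∧ c ≤ max (g v) (g s₂)
        · exact ih v s₂ hvs₂ hvS h2 hcard' c hcc.1 hcc.2
        · -- c must equal g u or g v
          push_neg at hcc
          have : c = g u ∨ c = g v := by
            rw [hgu]
            rcases le_or_gt (min (g v) (g s₂)) c with h | h
            · have := hcc h
              omega
            · omega
          rcases this with h | h
          · exact ⟨u, huS, h.symm⟩
          · exact ⟨v, hvS, h.symm⟩
      case neg =>
        -- x₀ is the only bad point in (s₁, s₂)
        obtain ⟨v, hv1, hv2, hvS⟩ := exists_between_notin S hx₀2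
        have huv : u < v := lt_trans hu2 hv1
        have honly : ∀ x ∈ S, x ∈ Set.Ioo u v → ∀ y ∈ S, y ∈ Set.Ioo u v → x = y := by
          have hone : ∀ x ∈ S, x ∈ Set.Ioo u v → x = x₀ := by
            intro x hx hmem
            have hxΦ : x ∈ Φ := Finset.mem_filter.mpr
              ⟨hx, lt_trans hu1 hmem.1, lt_trans hmem.2 hv2⟩
            by_contra hne'
            exact hTe ⟨x, Finset.mem_erase.mpr ⟨hne', hxΦ⟩⟩
          intro x hx hmx y hy hmy
          rw [hone x hx hmx, hone y hy hmy]
        have hjump := Hj u v huv huS hvS honly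
        have hgv : g v = g s₂ := by
          refine Hc v s₂ (le_of_lt hv2) ?_
          intro x hx hmem
          rcases eq_or_lt_of_le hmem.2 with h | h
          · exact h2 (h ▸ hx)
          rcases eq_or_lt_of_le hmem.1 with h' | h'
          · exact hvS (h' ▸ hx)
          have hxΦ : x ∈ Φ := Finset.mem_filter.mpr
            ⟨hx, by linarith, h⟩
          have hxne : x ≠ x₀ := by
            intro hq; rw [hq] at h'; linarith
          exact hTe ⟨x, Finset.mem_erase.mpr ⟨hxne, hxΦ⟩⟩
        have : c = g u ∨ c = g v := by
          rw [hgu, hgv]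
          omega
        rcases this with h | h
        · exact ⟨u, huS, h.symm⟩
        · exact ⟨v, hvS, h.symm⟩

lemma filter_ext {α : Type*} (s : Finset α) (p q : α → Prop) [DecidablePred p]
    [DecidablePred q] (h : ∀ x ∈ s, p x ↔ q x) :
    s.filter p = s.filter q := by
  ext x; simp only [Finset.mem_filter]
  exact ⟨fun ⟨hx, hp⟩ => ⟨hx, (h x hx).1 hp⟩, fun ⟨hx, hq⟩ => ⟨hx, (h x hx).2 hq⟩⟩

lemma erase_filter_ext {α : Type*} [DecidableEq α] (s : Finset α) (p q : α → Prop) [DecidablePred p]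
    [DecidablePred q] (x₀ : α)
    (h : ∀ x ∈ s, x ≠ x₀ → (p x ↔ q x)) :
    (s.filter p).erase x₀ = (s.filter q).erase x₀ := by
  ext x
  simp only [Finset.mem_erase, Finset.mem_filter]
  constructor
  · rintro ⟨hne, hx, hp⟩; exact ⟨hne, hx, (h x hx hne).1 hp⟩
  · rintro ⟨hne, hx, hq⟩; exact ⟨hne, hx, (h x hx hne).2 hq⟩

lemma card_le_of_erase_eq {α : Type*} [DecidableEq α] {F G : Finset α} {x₀ : α} (h : F.erase x₀ = G.erase x₀) :
    F.card ≤ G.card + 1 := by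
  have h1 : F ⊆ insert x₀ (F.erase x₀) := by
    intro x hx
    by_cases hq : x = x₀
    · exact Finset.mem_insert.mpr (Or.inl hq)
    · exact Finset.mem_insert.mpr (Or.inr (Finset.mem_erase.mpr ⟨hq, hx⟩))
  calc F.card ≤ (insert x₀ (F.erase x₀)).card := Finset.card_le_card h1
  _ ≤ (F.erase x₀).card + 1 := Finset.card_insert_le _ _
  _ = (G.erase x₀).card + 1 := by rw [h]
  _ ≤ G.card + 1 := by
      have := Finset.card_le_card (Finset.erase_subset x₀ G); omega

lemma core (X A B : Finset Pt) (hgp : GenPos ↑X) (hAX : A ⊆ X) (hBX : B ⊆ X)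
    (a b c₀ : ℝ) (hnd : a ≠ 0 ∨ b ≠ 0)
    (hAs : ∀ p ∈ A, a * p.1 + b * p.2 < c₀)
    (hBs : ∀ p ∈ B, c₀ < a * p.1 + b * p.2)
    (pst qst : ℕ) (hp1 : 1 ≤ pst) (hpA : pst ≤ A.card) (hqB : qst ≤ B.card) :
    ∃ l : LineT, Nondeg l ∧ (∀ x ∈ X, lval l x ≠ 0) ∧
      (A.filter fun p => lval l p < 0).card = pst ∧
      (B.filter fun p => lval l p < 0).card = qst := by
  have hdisj : ∀ p ∈ A, p ∉ B := by
    intro p hp hpB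
    have := hAs p hp
    have := hBs p hpB
    linarith
  set ζ : Pt → ℝ := fun p => a * p.1 + b * p.2 - c₀ with hζdef
  set η : Pt → ℝ := fun p => -b * p.1 + a * p.2 with hηdef
  set w : ℝ → Pt → ℝ := fun s p => η p - s * ζ p with hwdef
  have hinj2 : ∀ p q : Pt, ζ p = ζ q → η p = η q → p = q := by
    intro p q h1 h2
    simp only [hζdef, hηdef] at h1 h2
    have hd : (0:ℝ) < a^2 + b^2 := by
      rcases hnd with h | h <;> positivity
    have hx' : (a^2+b^2) * (p.1 - q.1) = 0 := by linear_combination a * h1 - b * h2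
    have hy' : (a^2+b^2) * (p.2 - q.2) = 0 := by linear_combination b * h1 + a * h2
    have hx : p.1 = q.1 := by
      rcases mul_eq_zero.mp hx' with h | h
      · exact absurd h (ne_of_gt hd)
      · linarith
    have hy : p.2 = q.2 := by
      rcases mul_eq_zero.mp hy' with h | h
      · exact absurd h (ne_of_gt hd)
      · linarith
    exact Prod.ext hx hy
  set Sbad : Finset ℝ :=
    ((X ×ˢ X).filter fun pq => pq.1 ≠ pq.2).image
      (fun pq => (η pq.1 - η pq.2) / (ζ pq.1 - ζ pq.2)) with hSbad
  have hroot : ∀ (s : ℝ) (p q : Pt), p ∈ X → q ∈ X → p ≠ q → w s p = w s q → s ∈ Sbad := by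
    intro s p q hpX hqX hpq heq
    simp only [hwdef] at heq
    have heq' : (η p - η q) - s * (ζ p - ζ q) = 0 := by linear_combination heq
    by_cases hz : ζ p = ζ q
    · exfalso
      apply hpq
      apply hinj2 p q hz
      linear_combination heq' + s * hz
    · have hm : ζ p - ζ q ≠ 0 := sub_ne_zero.mpr hz
      have hs : s = (η p - η q) / (ζ p - ζ q) := by
        field_simp
        linear_combination -heq'
      rw [hs]
      exact Finset.mem_image.mpr ⟨(p, q), by
        rw [Finset.mem_filter, Finset.mem_product]; exact ⟨⟨hpX, hqX⟩, hpq⟩, rfl⟩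
  have hgood : ∀ s, s ∉ Sbad → Set.InjOn (w s) ↑X := by
    intro s hs p hp q hq heq
    by_contra hne
    exact hs (hroot s p q hp hq hne heq)
  -- lines from parameters
  set lmk : ℝ → ℝ → LineT := fun s t => (-b - s * a, a - s * b, t - s * c₀) with hlmk
  have hlval : ∀ s t p, lval (lmk s t) p = w s p - t := by
    intro s t p
    simp only [hlmk, lval, hwdef, hηdef, hζdef]
    ring
  have hlnd : ∀ s t, Nondeg (lmk s t) := by
    intro s t
    by_contra h
    rw [Nondeg] at h
    push_neg at h
    obtain ⟨h1, h2⟩ := h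
    simp only [hlmk] at h1 h2
    have hb' : b * (1 + s^2) = 0 := by linear_combination (-1) * h1 + (-s) * h2
    have hb0 : b = 0 := by
      rcases mul_eq_zero.mp hb' with h | h
      · exact h
      · nlinarith [sq_nonneg s]
    have ha0 : a = 0 := by rw [hb0] at h2; linarith
    rcases hnd with h | h <;> [exact h ha0; exact h hb0]
  -- affine intermediate value
  have hIVT : ∀ (u v : ℝ) (p q : Pt), u ≤ v → (w u p - w u q) * (w v p - w v q) < 0 →
      ∃ x, x ∈ Set.Icc u v ∧ w x p = w x q := by
    intro u v p q huv hprod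
    set e := η p - η q with he
    set m := ζ p - ζ q with hm
    have hw' : ∀ x : ℝ, w x p - w x q = e - x * m := by
      intro x; simp only [hwdef, he, hm]; ring
    rw [hw', hw'] at hprod
    by_cases hm0 : m = 0
    · rw [hm0] at hprod
      have h' : (e - u*0)*(e - v*0) = e*e := by ring
      rw [h'] at hprod
      nlinarith [mul_self_nonneg e]
    · refine ⟨e / m, ⟨?_, ?_⟩, ?_⟩
      · by_contra hc
        push_neg at hc
        have h1 : e - u * m = m * (e/m - u) := by field_simp
        have h2 : e - v * m = m * (e/m - v) := by field_simp
        rw [h1, h2] at hprod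
        have hP : 0 < (e/m - u) * (e/m - v) :=
          mul_pos_of_neg_of_neg (by linarith) (by linarith)
        have hQ : 0 ≤ m * m * ((e/m - u) * (e/m - v)) :=
          mul_nonneg (mul_self_nonneg m) hP.le
        nlinarith [hQ]
      · by_contra hc
        push_neg at hc
        have h1 : e - u * m = m * (e/m - u) := by field_simp
        have h2 : e - v * m = m * (e/m - v) := by field_simp
        rw [h1, h2] at hprod
        have hP : 0 < (e/m - u) * (e/m - v) :=
          mul_pos (by linarith) (by linarith)
        have hQ : 0 ≤ m * m * ((e/m - u) * (e/m - v)) :=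
          mul_nonneg (mul_self_nonneg m) hP.le
        nlinarith [hQ]
      · have h3 : w (e/m) p - w (e/m) q = 0 := by
          rw [hw']; field_simp; ring
        exact sub_eq_zero.mp h3
  -- sign constancy over intervals with no equality
  have hsign : ∀ (u v : ℝ) (p q : Pt), u ≤ v → (∀ x ∈ Set.Icc u v, w x p ≠ w x q) →
      ((w u p < w u q) ↔ (w v p < w v q)) := by
    intro u v p q huv hnr
    have hu0 : w u p - w u q ≠ 0 := sub_ne_zero.mpr (hnr u ⟨le_refl u, huv⟩)
    have hv0 : w v p - w v q ≠ 0 := sub_ne_zero.mpr (hnr v ⟨huv, le_refl v⟩)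
    by_cases hcase : (w u p - w u q) * (w v p - w v q) < 0
    · obtain ⟨x, hx, heq⟩ := hIVT u v p q huv hcase
      exact absurd heq (hnr x hx)
    · push_neg at hcase
      constructor
      · intro h
        have h1 : w u p - w u q < 0 := sub_neg.mpr h
        have : 0 ≤ w v p - w v q → False := by
          intro h2
          rcases lt_or_eq_of_le h2 with h3 | h3
          · nlinarith
          · exact hv0 h3.symm
        by_contra hcon
        push_neg at hcon
        exact this (sub_nonneg.mpr hcon)
      · intro h
        have h1 : w v p - w v q < 0 := sub_neg.mpr h
        have : 0 ≤ w u p - w u q → False := by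
          intro h2
          rcases lt_or_eq_of_le h2 with h3 | h3
          · nlinarith
          · exact hu0 h3.symm
        by_contra hcon
        push_neg at hcon
        exact this (sub_nonneg.mpr hcon)
  -- the counting function
  set Dc : ℝ → ℕ := fun s =>
    (B.filter fun q => (A.filter fun p => w s p < w s q).card < pst).card with hDc
  have hABne : ∀ p, p ∈ A → ∀ q, q ∈ B → p ≠ q := by
    intro p hp q hq h
    exact hdisj p hp (h ▸ hq)
  have hHc : ∀ u v : ℝ, u ≤ v → (∀ x ∈ Sbad, x ∉ Set.Icc u v) → Dc u = Dc v := by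
    intro u v huv hnb
    have hkey : ∀ p ∈ A, ∀ q ∈ B, ((w u p < w u q) ↔ (w v p < w v q)) := by
      intro p hp q hq
      apply hsign u v p q huv
      intro x hx heq
      exact hnb x (hroot x p q (hAX hp) (hBX hq) (hABne p hp q hq) heq) hx
    simp only [hDc]
    apply congrArg
    apply filter_ext
    intro q hq
    have : (A.filter fun p => w u p < w u q) = (A.filter fun p => w v p < w v q) := by
      apply filter_ext
      intro p hp
      exact hkey p hp q hq
    rw [this]
  have hHj : ∀ u v : ℝ, u < v → u ∉ Sbad → v ∉ Sbad →
      (∀ x ∈ Sbad, x ∈ Set.Ioo u v → ∀ y ∈ Sbad, y ∈ Set.Ioo u v → x = y) →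
      ((Dc u : ℤ) - (Dc v : ℤ)).natAbs ≤ 1 := by
    intro u v huv huS hvS honly
    by_cases hbad : ∃ x ∈ Sbad, x ∈ Set.Ioo u v
    case neg =>
      have heq : Dc u = Dc v := by
        apply hHc u v huv.le
        intro x hx hmem
        rcases eq_or_lt_of_le hmem.1 with h | h
        · exact huS (h ▸ hx)
        rcases eq_or_lt_of_le hmem.2 with h' | h'
        · exact hvS (h'.symm ▸ hx)
        · exact hbad ⟨x, hx, h, h'⟩
      rw [heq]
      simp
    case pos =>
      obtain ⟨s₀, hs₀S, hs₀I⟩ := hbad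
      have htrans : ∀ p ∈ X, ∀ q ∈ X, p ≠ q → w s₀ p ≠ w s₀ q →
          ((w u p < w u q ↔ w s₀ p < w s₀ q) ∧ (w v p < w v q ↔ w s₀ p < w s₀ q)) := by
        intro p hp q hq hpq hne
        constructor
        · apply hsign u s₀ p q hs₀I.1.le
          intro x hx heq
          have hxS : x ∈ Sbad := hroot x p q hp hq hpq heq
          have hx1 : x ≠ s₀ := fun h => hne (h ▸ heq)
          have hxu : x ≠ u := fun h => huS (h ▸ hxS)
          have hxI : x ∈ Set.Ioo u v :=
            ⟨lt_of_le_of_ne hx.1 (Ne.symm hxu), lt_of_le_of_lt hx.2 hs₀I.2⟩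
          exact hx1 (honly x hxS hxI s₀ hs₀S hs₀I)
        · refine (hsign s₀ v p q hs₀I.2.le ?_).symm
          intro x hx heq
          have hxS : x ∈ Sbad := hroot x p q hp hq hpq heq
          have hx1 : x ≠ s₀ := fun h => hne (h ▸ heq)
          have hxv : x ≠ v := fun h => hvS (h ▸ hxS)
          have hxI : x ∈ Set.Ioo u v :=
            ⟨lt_of_lt_of_le hs₀I.1 hx.1, lt_of_le_of_ne hx.2 hxv⟩
          exact hx1 (honly x hxS hxI s₀ hs₀S hs₀I)
      set cA : ℝ → Pt → ℕ := fun s q => (A.filter fun p => w s p < w s q).card with hcA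
      set Lq : Pt → Finset Pt := fun q => A.filter fun p => w s₀ p < w s₀ q with hLqdef
      have huniq : ∀ q ∈ B, ∀ p ∈ A, ∀ p' ∈ A, w s₀ p = w s₀ q → w s₀ p' = w s₀ q → p = p' := by
        intro q hq p hp p' hp' h1 h2
        by_contra hne
        refine genpos_line X hgp (hlnd s₀ (w s₀ q)) (hAX hp) (hAX hp') (hBX hq) hne
          (hABne p hp q hq) (hABne p' hp' q hq) ?_ ?_ ?_
        · rw [hlval, h1, sub_self]
        · rw [hlval, h2, sub_self]
        · rw [hlval, sub_self]
      have hqcases : ∀ q ∈ B, (cA u q = cA v q) ∨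
          ((Lq q).card ≤ cA u q ∧ cA u q ≤ (Lq q).card + 1 ∧
           (Lq q).card ≤ cA v q ∧ cA v q ≤ (Lq q).card + 1 ∧
           ∃ p₀ ∈ A, w s₀ p₀ = w s₀ q) := by
        intro q hq
        by_cases hex : ∃ p₀ ∈ A, w s₀ p₀ = w s₀ q
        · right
          obtain ⟨p₀, hp₀A, hp₀e⟩ := hex
          have hkey : ∀ (s' : ℝ),
              (∀ p ∈ A, w s₀ p ≠ w s₀ q → (w s' p < w s' q ↔ w s₀ p < w s₀ q)) →
              (Lq q).card ≤ cA s' q ∧ cA s' q ≤ (Lq q).card + 1 := by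
            intro s' htr
            have her : (A.filter fun p => w s' p < w s' q).erase p₀ = (Lq q).erase p₀ := by
              apply erase_filter_ext
              intro p hpA hnep
              apply htr p hpA
              intro heqq
              exact hnep (huniq q hq p hpA p₀ hp₀A heqq hp₀e)
            constructor
            · have hp₀no : p₀ ∉ Lq q := by
                simp only [hLqdef, Finset.mem_filter]
                rintro ⟨-, hlt⟩
                rw [hp₀e] at hlt
                exact lt_irrefl _ hlt
              have hLe : Lq q = (Lq q).erase p₀ := (Finset.erase_eq_of_notMem hp₀no).symm
              calc (Lq q).card = ((Lq q).erase p₀).card := by rw [← hLe]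
              _ = ((A.filter fun p => w s' p < w s' q).erase p₀).card := by rw [her]
              _ ≤ cA s' q := Finset.card_le_card (Finset.erase_subset _ _)
            · exact card_le_of_erase_eq her
          have htru : ∀ p ∈ A, w s₀ p ≠ w s₀ q → (w u p < w u q ↔ w s₀ p < w s₀ q) := by
            intro p hpA hne
            exact (htrans p (hAX hpA) q (hBX hq) (hABne p hpA q hq) hne).1
          have htrv : ∀ p ∈ A, w s₀ p ≠ w s₀ q → (w v p < w v q ↔ w s₀ p < w s₀ q) := by
            intro p hpA hne
            exact (htrans p (hAX hpA) q (hBX hq) (hABne p hpA q hq) hne).2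
          obtain ⟨hu1, hu2⟩ := hkey u htru
          obtain ⟨hv1, hv2⟩ := hkey v htrv
          exact ⟨hu1, hu2, hv1, hv2, p₀, hp₀A, hp₀e⟩
        · left
          have hfe : (A.filter fun p => w u p < w u q) = (A.filter fun p => w v p < w v q) := by
            apply filter_ext
            intro p hpA
            have hne : w s₀ p ≠ w s₀ q := fun he => hex ⟨p, hpA, he⟩
            have h12 := htrans p (hAX hpA) q (hBX hq) (hABne p hpA q hq) hne
            rw [h12.1, h12.2]
          simp only [hcA]
          rw [hfe]
      have hflip : ∀ q ∈ B, ¬((cA u q < pst) ↔ (cA v q < pst)) →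
          ((Lq q).card + 1 = pst ∧ ∃ p₀ ∈ A, w s₀ p₀ = w s₀ q) := by
        intro q hq hf
        rcases hqcases q hq with heq | ⟨h1, h2, h3, h4, hex⟩
        · exact absurd (by rw [heq]) hf
        · refine ⟨?_, hex⟩
          by_cases hu' : cA u q < pst <;> by_cases hv' : cA v q < pst
          · exact absurd (iff_of_true hu' hv') hf
          · omega
          · omega
          · exact absurd (iff_of_false hu' hv') hf
      have hflipuniq : ∀ q ∈ B, ∀ q' ∈ B, ¬((cA u q < pst) ↔ (cA v q < pst)) →
          ¬((cA u q' < pst) ↔ (cA v q' < pst)) → q = q' := by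
        intro q hq q' hq' hf hf'
        by_contra hne
        obtain ⟨hL1, p₀, hp₀A, hp₀e⟩ := hflip q hq hf
        obtain ⟨hL1', p₀', hp₀A', hp₀e'⟩ := hflip q' hq' hf'
        have hmain : ∀ qa ∈ B, ∀ qb ∈ B, (Lq qa).card + 1 = pst → (Lq qb).card + 1 = pst →
            ∀ pa ∈ A, w s₀ pa = w s₀ qa → w s₀ qa < w s₀ qb → False := by
          intro qa hqa qb hqb hLa hLb pa hpaA hpae hlt
          have hsub : insert pa (Lq qa) ⊆ Lq qb := by
            intro x hx
            rcases Finset.mem_insert.mp hx with rfl | hx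
            · simp only [hLqdef, Finset.mem_filter]
              exact ⟨hpaA, by rw [hpae]; exact hlt⟩
            · simp only [hLqdef, Finset.mem_filter] at hx ⊢
              exact ⟨hx.1, lt_trans hx.2 hlt⟩
          have hpano : pa ∉ Lq qa := by
            simp only [hLqdef, Finset.mem_filter]
            rintro ⟨-, hlt'⟩
            rw [hpae] at hlt'
            exact lt_irrefl _ hlt'
          have hcards := Finset.card_le_card hsub
          rw [Finset.card_insert_of_notMem hpano] at hcards
          omega
        rcases lt_trichotomy (w s₀ q) (w s₀ q') with h | h | h
        · exact hmain q hq q' hq' hL1 hL1' p₀ hp₀A hp₀e h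
        · refine genpos_line X hgp (hlnd s₀ (w s₀ q)) (hAX hp₀A) (hBX hq) (hBX hq')
            (hABne p₀ hp₀A q hq) (hABne p₀ hp₀A q' hq') hne ?_ ?_ ?_
          · rw [hlval, hp₀e, sub_self]
          · rw [hlval, sub_self]
          · rw [hlval, h, sub_self]
        · exact hmain q' hq' q hq hL1' hL1 p₀' hp₀A' hp₀e' h
      by_cases hfe : ∃ q₀ ∈ B, ¬((cA u q₀ < pst) ↔ (cA v q₀ < pst))
      · obtain ⟨q₀, hq₀, hfq₀⟩ := hfe
        have her : (B.filter fun q => cA u q < pst).erase q₀ =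
            (B.filter fun q => cA v q < pst).erase q₀ := by
          apply erase_filter_ext
          intro q hq hneq
          by_contra hiff
          exact hneq (hflipuniq q hq q₀ hq₀ hiff hfq₀)
        have h1 := card_le_of_erase_eq her
        have h2 := card_le_of_erase_eq her.symm
        have hDu : Dc u = (B.filter fun q => cA u q < pst).card := by
          simp only [hDc, hcA]
        have hDv : Dc v = (B.filter fun q => cA v q < pst).card := by
          simp only [hDc, hcA]
        rw [hDu, hDv]
        omega
      · push_neg at hfe
        have heq : Dc u = Dc v := by
          simp only [hDc]
          apply congrArg
          apply filter_ext
          intro q hq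
          exact hfe q hq
        rw [heq]
        simp
  set Rat : Finset ℝ := (A ×ˢ B).image (fun pq => (η pq.1 - η pq.2) / (ζ pq.1 - ζ pq.2))
    with hRat
  set W' : Finset ℝ := insert 0 (Sbad ∪ Rat) with hW'
  have hW'ne : W'.Nonempty := ⟨0, Finset.mem_insert_self _ _⟩
  set s₁ := W'.min' hW'ne - 1 with hs₁def
  set s₂ := W'.max' hW'ne + 1 with hs₂def
  have hs₁lt : ∀ x ∈ W', s₁ < x := by
    intro x hx
    have := W'.min'_le x hx
    rw [hs₁def]
    linarith
  have hs₂gt : ∀ x ∈ W', x < s₂ := by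
    intro x hx
    have := W'.le_max' x hx
    rw [hs₂def]
    linarith
  have hSsub : Sbad ⊆ W' := fun x hx => Finset.mem_insert_of_mem (Finset.mem_union_left _ hx)
  have hRsub : Rat ⊆ W' := fun x hx => Finset.mem_insert_of_mem (Finset.mem_union_right _ hx)
  have hs₁S : s₁ ∉ Sbad := fun h => lt_irrefl s₁ (hs₁lt s₁ (hSsub h))
  have hs₂S : s₂ ∉ Sbad := fun h => lt_irrefl s₂ (hs₂gt s₂ (hSsub h))
  have h12 : s₁ < s₂ := by
    have h1 := W'.min'_le _ (W'.max'_mem hW'ne)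
    rw [hs₁def, hs₂def]
    linarith
  have hABord : ∀ p ∈ A, ∀ q ∈ B, (w s₁ p < w s₁ q) ∧ (w s₂ q < w s₂ p) := by
    intro p hp q hq
    have hzp : ζ p < 0 := by
      have := hAs p hp
      simp only [hζdef]
      linarith
    have hzq : 0 < ζ q := by
      have := hBs q hq
      simp only [hζdef]
      linarith
    have hm : ζ p - ζ q < 0 := by linarith
    have hmne : ζ p - ζ q ≠ 0 := ne_of_lt hm
    set r := (η p - η q) / (ζ p - ζ q) with hrdef
    have hrW : r ∈ W' := by
      apply hRsub
      rw [hRat]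
      exact Finset.mem_image.mpr ⟨(p, q), Finset.mem_product.mpr ⟨hp, hq⟩, rfl⟩
    have hkey : ∀ s : ℝ, w s p - w s q = (ζ p - ζ q) * (r - s) := by
      intro s
      simp only [hwdef, hrdef]
      field_simp
      ring
    constructor
    · have h := hkey s₁
      have hrs : s₁ < r := hs₁lt r hrW
      have hneg : w s₁ p - w s₁ q < 0 := by
        rw [h]
        exact mul_neg_of_neg_of_pos hm (by linarith)
      linarith
    · have h := hkey s₂
      have hrs : r < s₂ := hs₂gt r hrW
      have hpos : 0 < w s₂ p - w s₂ q := by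
        rw [h]
        exact mul_pos_of_neg_of_neg hm (by linarith)
      linarith
  have hD1 : Dc s₁ = 0 := by
    simp only [hDc]
    rw [Finset.card_eq_zero, Finset.filter_eq_empty_iff]
    intro q hq
    have hfull : (A.filter fun p => w s₁ p < w s₁ q) = A := by
      apply Finset.filter_true_of_mem
      intro p hp
      exact (hABord p hp q hq).1
    rw [hfull]
    omega
  have hD2 : Dc s₂ = B.card := by
    simp only [hDc]
    have hfull : (B.filter fun q => (A.filter fun p => w s₂ p < w s₂ q).card < pst) = B := by
      apply Finset.filter_true_of_mem
      intro q hq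
      have hempty : (A.filter fun p => w s₂ p < w s₂ q) = ∅ := by
        rw [Finset.filter_eq_empty_iff]
        intro p hp
        exact not_lt.mpr (le_of_lt (hABord p hp q hq).2)
      rw [hempty]
      simp only [Finset.card_empty]; omega
    rw [hfull]
  obtain ⟨sstar, hsS, hsD⟩ := staircase (fun s => (Dc s : ℤ)) Sbad
    (fun u v huv h => by show ((Dc u : ℤ)) = ((Dc v : ℤ)); exact_mod_cast hHc u v huv h)
    (fun u v h1 h2 h3 h4 => hHj u v h1 h2 h3 h4)
    (Sbad.filter (· ∈ Set.Ioo s₁ s₂)).card s₁ s₂ h12 hs₁S hs₂S le_rfl (qst : ℤ)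
    (by simp only [hD1, hD2]; push_cast; omega)
    (by simp only [hD1, hD2]; push_cast; omega)
  have hsDn : Dc sstar = qst := by exact_mod_cast hsD
  have hwinj : Set.InjOn (w sstar) ↑X := hgood sstar hsS
  set lowA := A.filter (fun p => (A.filter fun r => w sstar r < w sstar p).card < pst)
    with hlA
  set lowB := B.filter (fun q => (A.filter fun p => w sstar p < w sstar q).card < pst)
    with hlB
  have hlAc : lowA.card = pst := by
    rw [hlA, rank_card A (w sstar) (hwinj.mono (Finset.coe_subset.mpr hAX))]
    omega
  have hlBc : lowB.card = qst := by
    rw [hlB]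
    simp only [hDc] at hsDn
    exact hsDn
  have hdc : ∀ x ∈ lowA ∪ lowB, ∀ y ∈ A ∪ B, w sstar y < w sstar x → y ∈ lowA ∪ lowB := by
    intro x hx y hy hlt
    have hxr : (A.filter fun p => w sstar p < w sstar x).card < pst := by
      rcases Finset.mem_union.mp hx with h | h
      · exact (Finset.mem_filter.mp h).2
      · exact (Finset.mem_filter.mp h).2
    have hyr : (A.filter fun p => w sstar p < w sstar y).card < pst := by
      have hsub : (A.filter fun p => w sstar p < w sstar y) ⊆
          (A.filter fun p => w sstar p < w sstar x) := by
        intro p hp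
        rw [Finset.mem_filter] at hp ⊢
        exact ⟨hp.1, lt_trans hp.2 hlt⟩
      exact lt_of_le_of_lt (Finset.card_le_card hsub) hxr
    rcases Finset.mem_union.mp hy with h | h
    · exact Finset.mem_union_left _ (Finset.mem_filter.mpr ⟨h, hyr⟩)
    · exact Finset.mem_union_right _ (Finset.mem_filter.mpr ⟨h, hyr⟩)
  obtain ⟨t, htX, htf⟩ := sel X (A ∪ B) (lowA ∪ lowB) (w sstar)
    (Finset.union_subset hAX hBX)
    (Finset.union_subset_union (Finset.filter_subset _ _) (Finset.filter_subset _ _))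
    hwinj hdc
  have hABdisj : ∀ x, x ∈ A → x ∈ B → False := fun x hx hx' => hdisj x hx hx'
  have hAff : A.filter (fun p => w sstar p < t) = lowA := by
    apply Finset.Subset.antisymm
    · intro x hx
      rw [Finset.mem_filter] at hx
      have hx2 : x ∈ (A ∪ B).filter (fun p => w sstar p < t) :=
        Finset.mem_filter.mpr ⟨Finset.mem_union_left _ hx.1, hx.2⟩
      rw [htf] at hx2
      rcases Finset.mem_union.mp hx2 with h | h
      · exact h
      · exact absurd (Finset.filter_subset _ _ h) (fun hB => hABdisj x hx.1 hB)
    · intro x hx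
      have hx2 : x ∈ lowA ∪ lowB := Finset.mem_union_left _ hx
      rw [← htf] at hx2
      rw [Finset.mem_filter] at hx2 ⊢
      exact ⟨Finset.filter_subset _ _ hx, hx2.2⟩
  have hBff : B.filter (fun p => w sstar p < t) = lowB := by
    apply Finset.Subset.antisymm
    · intro x hx
      rw [Finset.mem_filter] at hx
      have hx2 : x ∈ (A ∪ B).filter (fun p => w sstar p < t) :=
        Finset.mem_filter.mpr ⟨Finset.mem_union_right _ hx.1, hx.2⟩
      rw [htf] at hx2
      rcases Finset.mem_union.mp hx2 with h | h
      · exact absurd (Finset.filter_subset _ _ h) (fun hA => hABdisj x hA hx.1)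
      · exact h
    · intro x hx
      have hx2 : x ∈ lowA ∪ lowB := Finset.mem_union_right _ hx
      rw [← htf] at hx2
      rw [Finset.mem_filter] at hx2 ⊢
      exact ⟨Finset.filter_subset _ _ hx, hx2.2⟩
  refine ⟨lmk sstar t, hlnd sstar t, ?_, ?_, ?_⟩
  · intro x hx
    rw [hlval]
    exact sub_ne_zero.mpr (htX x hx)
  · have hcg : (A.filter fun p => lval (lmk sstar t) p < 0) =
        A.filter (fun p => w sstar p < t) := by
      apply filter_ext
      intro p _
      rw [hlval]
      exact sub_neg
    rw [hcg, hAff, hlAc]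
  · have hcg : (B.filter fun p => lval (lmk sstar t) p < 0) =
        B.filter (fun p => w sstar p < t) := by
      apply filter_ext
      intro p _
      rw [hlval]
      exact sub_neg
    rw [hcg, hBff, hlBc]

/-- single exact cut -/
lemma single (X B : Finset Pt) (hBX : B ⊆ X) (n : ℕ) (hn : n ≤ B.card) :
    ∃ l : LineT, Nondeg l ∧ (∀ x ∈ X, lval l x ≠ 0) ∧
      (B.filter fun p => lval l p < 0).card = n := by
  set w : ℝ → Pt → ℝ := fun s p => p.2 - s * p.1 with hwdef
  set Sbad : Finset ℝ :=
    ((X ×ˢ X).filter fun pq => pq.1 ≠ pq.2).image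
      (fun pq => (pq.1.2 - pq.2.2) / (pq.1.1 - pq.2.1)) with hSbad
  set W' : Finset ℝ := insert 0 Sbad with hW'
  have hW'ne : W'.Nonempty := ⟨0, Finset.mem_insert_self _ _⟩
  set s := W'.min' hW'ne - 1 with hsdef
  have hsS : s ∉ Sbad := by
    intro h
    have h2 := W'.min'_le s (Finset.mem_insert_of_mem h)
    have h3 : s < W'.min' hW'ne := by rw [hsdef]; linarith
    linarith
  have hwinj : Set.InjOn (w s) ↑X := by
    intro p hp q hq heq
    by_contra hne
    simp only [hwdef] at heq
    by_cases hx : p.1 = q.1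
    · have : p.2 = q.2 := by
        rw [hx] at heq; linarith
      exact hne (Prod.ext hx this)
    · have hm : p.1 - q.1 ≠ 0 := sub_ne_zero.mpr hx
      have hs' : s = (p.2 - q.2) / (p.1 - q.1) := by
        field_simp
        linarith
      apply hsS
      rw [hs']
      exact Finset.mem_image.mpr ⟨(p, q), by
        rw [Finset.mem_filter, Finset.mem_product]; exact ⟨⟨hp, hq⟩, hne⟩, rfl⟩
  set lowB := B.filter (fun p => (B.filter fun r => w s r < w s p).card < n) with hlB
  have hlBc : lowB.card = n := by
    rw [hlB, rank_card B (w s) (hwinj.mono (Finset.coe_subset.mpr hBX))]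
    omega
  have hdc : ∀ x ∈ lowB, ∀ y ∈ B, w s y < w s x → y ∈ lowB := by
    intro x hx y hy hlt
    rw [Finset.mem_filter] at hx ⊢
    refine ⟨hy, lt_of_le_of_lt (Finset.card_le_card ?_) hx.2⟩
    intro p hp
    rw [Finset.mem_filter] at hp ⊢
    exact ⟨hp.1, lt_trans hp.2 hlt⟩
  obtain ⟨t, htX, htf⟩ := sel X B lowB (w s) hBX (Finset.filter_subset _ _) hwinj hdc
  refine ⟨(-s, 1, t), Or.inr one_ne_zero, ?_, ?_⟩
  · intro x hx
    have : lval (-s, 1, t) x = w s x - t := by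
      simp only [lval, hwdef]; ring
    rw [this]
    exact sub_ne_zero.mpr (htX x hx)
  · have hcg : (B.filter fun p => lval (-s, 1, t) p < 0) = B.filter (fun p => w s p < t) := by
      apply filter_ext
      intro p _
      have : lval (-s, 1, t) p = w s p - t := by
        simp only [lval, hwdef]; ring
      rw [this]
      exact sub_neg
    rw [hcg, htf, hlBc]

/-- general simultaneous split -/
lemma gsplit (X A B : Finset Pt) (hgp : GenPos ↑X) (hAX : A ⊆ X) (hBX : B ⊆ X)
    (a b c₀ : ℝ) (hnd : a ≠ 0 ∨ b ≠ 0)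
    (hAs : ∀ p ∈ A, a * p.1 + b * p.2 < c₀)
    (hBs : ∀ p ∈ B, c₀ < a * p.1 + b * p.2)
    (pst qst : ℕ) (hpA : pst ≤ A.card) (hqB : qst ≤ B.card) :
    ∃ l : LineT, Nondeg l ∧ (∀ x ∈ X, lval l x ≠ 0) ∧
      (A.filter fun p => lval l p < 0).card = pst ∧
      (B.filter fun p => lval l p < 0).card = qst := by
  by_cases hp0 : 1 ≤ pst
  · exact core X A B hgp hAX hBX a b c₀ hnd hAs hBs pst qst hp0 hpA hqB
  · have hpz : pst = 0 := by omega
    subst hpz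
    by_cases hq0 : 1 ≤ qst
    · have hnd' : -a ≠ 0 ∨ -b ≠ 0 := by
        rcases hnd with h | h
        · exact Or.inl (neg_ne_zero.mpr h)
        · exact Or.inr (neg_ne_zero.mpr h)
      obtain ⟨l, h1, h2, h3, h4⟩ := core X B A hgp hBX hAX (-a) (-b) (-c₀) hnd'
        (fun p hp => by have := hBs p hp; linarith)
        (fun p hp => by have := hAs p hp; linarith)
        qst 0 hq0 hqB (Nat.zero_le _)
      exact ⟨l, h1, h2, h4, h3⟩
    · have hqz : qst = 0 := by omega
      subst hqz
      obtain ⟨l, h1, h2, h3⟩ := single X (A ∪ B) (Finset.union_subset hAX hBX) 0 (Nat.zero_le _)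
      rw [Finset.card_eq_zero] at h3
      refine ⟨l, h1, h2, ?_, ?_⟩
      · rw [Finset.card_eq_zero, ← Finset.subset_empty, ← h3, Finset.filter_union]
        exact Finset.subset_union_left
      · rw [Finset.card_eq_zero, ← Finset.subset_empty, ← h3, Finset.filter_union]
        exact Finset.subset_union_right

lemma sameside_neg {l : LineT} {x y : Pt} (h : 0 < lval l x * lval l y) (hx : lval l x < 0) :
    lval l y < 0 := by nlinarith

lemma sameside_pos {l : LineT} {x y : Pt} (h : 0 < lval l x * lval l y) (hx : 0 < lval l x) :
    0 < lval l y := by nlinarith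

/-- the recursive construction -/
lemma claim (X : Finset Pt) (hgp : GenPos ↑X) (m : ℕ) :
    ∀ k : ℕ, ∀ C R : Finset Pt, C ⊆ X → R ⊆ X →
    ∀ l₀ : LineT, Nondeg l₀ → (∀ p ∈ C, lval l₀ p < 0) → (∀ p ∈ R, 0 < lval l₀ p) →
    1 ≤ k → C.card ≤ 2 * m → R.card ≤ 2 * k * m →
    ∃ Ls : List LineT, Ls.length ≤ k ∧
      (∀ l ∈ Ls, Nondeg l ∧ ∀ x ∈ X, lval l x ≠ 0) ∧
      ∀ x ∈ C ∪ R, ((C ∪ R).filter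
        (fun y => ∀ l ∈ (l₀ :: Ls), 0 < lval l x * lval l y)).card ≤ m := by
  intro k
  induction k with
  | zero =>
    intro C R _ _ l₀ _ _ _ hk _ _
    omega
  | succ k ihk =>
    intro C R hCX hRX l₀ hl₀nd hC hR _ hCc hRc
    -- split line
    set pst := C.card / 2 with hpst
    set qst := if k = 0 then R.card / 2 else min (2 * m) R.card with hqst
    have hqle : qst ≤ R.card := by
      rw [hqst]
      split
      · omega
      · exact min_le_right _ _
    obtain ⟨g, hgnd, hgX, hgC, hgR⟩ := gsplit X C R hgp hCX hRX l₀.1 l₀.2.1 l₀.2.2 hl₀nd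
      (fun p hp => by have := hC p hp; simp only [lval] at this; linarith)
      (fun p hp => by have := hR p hp; simp only [lval] at this; linarith)
      pst qst (Nat.div_le_self _ _) hqle
    -- the four pieces
    set C1 := C.filter (fun p => lval g p < 0) with hC1
    set C2 := C.filter (fun p => 0 < lval g p) with hC2
    set R1 := R.filter (fun p => lval g p < 0) with hR1
    set R2 := R.filter (fun p => 0 < lval g p) with hR2
    have hsplitCard : ∀ (S : Finset Pt), S ⊆ X →
        (S.filter (fun p => 0 < lval g p)).card =
          S.card - (S.filter (fun p => lval g p < 0)).card ∧
        S.filter (fun p => lval g p < 0) ∪ S.filter (fun p => 0 < lval g p) = S := by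
      intro S hSX
      have hpart : S.filter (fun p => 0 < lval g p) = S.filter (fun p => ¬ lval g p < 0) := by
        apply filter_ext
        intro x hx
        have hne := hgX x (hSX hx)
        constructor
        · intro h; linarith
        · intro h
          rcases lt_trichotomy (lval g x) 0 with h' | h' | h'
          · exact absurd h' h
          · exact absurd h' hne
          · exact h'
      constructor
      · rw [hpart]
        have := Finset.card_filter_add_card_filter_not (s := S)
          (p := fun p => lval g p < 0)
        omega
      · rw [hpart]
        rw [Finset.filter_union_filter_not_eq]
    have hCparts := hsplitCard C hCX
    have hRparts := hsplitCard R hRX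
    have hC1c : C1.card = pst := hgC
    have hC2c : C2.card = C.card - pst := by rw [hC2]; exact hCparts.1 ▸ (by rw [hgC])
    have hR1c : R1.card = qst := hgR
    have hR2c : R2.card = R.card - qst := by rw [hR2]; exact hRparts.1 ▸ (by rw [hgR])
    have hC1m : C1.card ≤ m := by rw [hC1c, hpst]; omega
    have hC2m : C2.card ≤ m := by rw [hC2c, hpst]; omega
    by_cases hk0 : k = 0
    · -- base case: one split line suffices
      subst hk0
      have hR1m : R1.card ≤ m := by
        rw [hR1c, hqst, if_pos rfl]
        omega
      have hR2m : R2.card ≤ m := by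
        rw [hR2c, hqst, if_pos rfl]
        omega
      refine ⟨[g], by simp, ?_, ?_⟩
      · intro l hl
        rw [List.mem_singleton] at hl
        subst hl
        exact ⟨hgnd, hgX⟩
      intro x hx
      -- determine the quadrant of x
      have hxX : x ∈ X := by
        rcases Finset.mem_union.mp hx with h | h
        · exact hCX h
        · exact hRX h
      have hsub : ((C ∪ R).filter
          (fun y => ∀ l ∈ (l₀ :: [g]), 0 < lval l x * lval l y)) ⊆
          (if x ∈ C then C else R).filter
            (fun y => if lval g x < 0 then lval g y < 0 else 0 < lval g y) := by
        intro y hy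
        rw [Finset.mem_filter] at hy ⊢
        obtain ⟨hyCR, hyl⟩ := hy
        have h0 := hyl l₀ (by simp)
        have hg := hyl g (by simp)
        constructor
        · by_cases hxC : x ∈ C
          · simp only [if_pos hxC]
            have hxneg := hC x hxC
            have hyneg := sameside_neg h0 hxneg
            rcases Finset.mem_union.mp hyCR with h | h
            · exact h
            · exact absurd hyneg (by have := hR y h; linarith)
          · simp only [if_neg hxC]
            have hxR : x ∈ R := by
              rcases Finset.mem_union.mp hx with h | h
              · exact absurd h hxC
              · exact h
            have hxpos := hR x hxR
            have hypos := sameside_pos h0 hxpos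
            rcases Finset.mem_union.mp hyCR with h | h
            · exact absurd hypos (by have := hC y h; linarith)
            · exact h
        · by_cases hgx : lval g x < 0
          · simp only [if_pos hgx]
            exact sameside_neg hg hgx
          · simp only [if_neg hgx]
            have : 0 < lval g x := by
              rcases lt_trichotomy (lval g x) 0 with h' | h' | h'
              · exact absurd h' hgx
              · exact absurd h' (hgX x hxX)
              · exact h'
            exact sameside_pos hg this
      refine le_trans (Finset.card_le_card hsub) ?_
      by_cases hxC : x ∈ C <;> by_cases hgx : lval g x < 0 <;>
        simp only [if_pos, if_neg, hxC, hgx]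
      · exact hC1m
      · exact hC2m
      · exact hR1m
      · exact hR2m
    · -- recursive case
      have hk1 : 1 ≤ k := by omega
      have hR1X : R1 ⊆ X := le_trans (Finset.filter_subset _ _) hRX
      have hR2X : R2 ⊆ X := le_trans (Finset.filter_subset _ _) hRX
      have hqval : qst = min (2 * m) R.card := by rw [hqst, if_neg hk0]
      have hR1m2 : R1.card ≤ 2 * m := by rw [hR1c, hqval]; exact min_le_left _ _
      have hR2m2 : R2.card ≤ 2 * k * m := by
        rw [hR2c, hqval]
        rcases le_or_gt R.card (2 * m) with h | h
        · rw [min_eq_right h]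
          omega
        · rw [min_eq_left h.le]
          have hRc' : R.card ≤ 2 * (k+1) * m := hRc
          have h2 : 2 * (k + 1) * m = 2*k*m + 2*m := by ring
          omega
      obtain ⟨Ls', hlen', hgood', hbound'⟩ := ihk R1 R2 hR1X hR2X g hgnd
        (fun p hp => (Finset.mem_filter.mp hp).2)
        (fun p hp => (Finset.mem_filter.mp hp).2)
        hk1 hR1m2 hR2m2
      refine ⟨g :: Ls', by simpa using hlen', ?_, ?_⟩
      · intro l hl
        rcases List.mem_cons.mp hl with rfl | hl
        · exact ⟨hgnd, hgX⟩
        · exact hgood' l hl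
      intro x hx
      have hxX : x ∈ X := by
        rcases Finset.mem_union.mp hx with h | h
        · exact hCX h
        · exact hRX h
      by_cases hxC : x ∈ C
      · -- x on the C side: class within C, split by g
        have hsub : ((C ∪ R).filter
            (fun y => ∀ l ∈ (l₀ :: g :: Ls'), 0 < lval l x * lval l y)) ⊆
            C.filter (fun y => if lval g x < 0 then lval g y < 0 else 0 < lval g y) := by
          intro y hy
          rw [Finset.mem_filter] at hy ⊢
          obtain ⟨hyCR, hyl⟩ := hy
          have h0 := hyl l₀ (by simp)
          have hg := hyl g (by simp)
          constructor
          · have hxneg := hC x hxC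
            have hyneg := sameside_neg h0 hxneg
            rcases Finset.mem_union.mp hyCR with h | h
            · exact h
            · exact absurd hyneg (by have := hR y h; linarith)
          · by_cases hgx : lval g x < 0
            · simp only [if_pos hgx]
              exact sameside_neg hg hgx
            · simp only [if_neg hgx]
              have : 0 < lval g x := by
                rcases lt_trichotomy (lval g x) 0 with h' | h' | h'
                · exact absurd h' hgx
                · exact absurd h' (hgX x hxX)
                · exact h'
              exact sameside_pos hg this
        refine le_trans (Finset.card_le_card hsub) ?_
        by_cases hgx : lval g x < 0 <;> simp only [if_pos, if_neg, hgx]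
        · exact hC1m
        · exact hC2m
      · -- x on the R side: use the recursive bound
        have hxR : x ∈ R := by
          rcases Finset.mem_union.mp hx with h | h
          · exact absurd h hxC
          · exact h
        have hxR12 : x ∈ R1 ∪ R2 := by
          rw [hRparts.2] at *
          exact hxR
        have hsub : ((C ∪ R).filter
            (fun y => ∀ l ∈ (l₀ :: g :: Ls'), 0 < lval l x * lval l y)) ⊆
            ((R1 ∪ R2).filter (fun y => ∀ l ∈ (g :: Ls'), 0 < lval l x * lval l y)) := by
          intro y hy
          rw [Finset.mem_filter] at hy ⊢
          obtain ⟨hyCR, hyl⟩ := hy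
          have h0 := hyl l₀ (by simp)
          have hxpos := hR x hxR
          have hypos := sameside_pos h0 hxpos
          have hyR : y ∈ R := by
            rcases Finset.mem_union.mp hyCR with h | h
            · exact absurd hypos (by have := hC y h; linarith)
            · exact h
          refine ⟨by rw [hRparts.2]; exact hyR, ?_⟩
          intro l hl
          exact hyl l (List.mem_cons_of_mem _ hl)
        refine le_trans (Finset.card_le_card hsub) (hbound' x hxR12)

/-- top-level: K lines with all classes ≤ m -/
lemma arrange (X : Finset Pt) (hgp : GenPos ↑X) (K : ℕ) (hK : 1 ≤ K) (m : ℕ)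
    (hm : X.card ≤ 2 * K * m) :
    ∃ Ls : List LineT, Ls.length ≤ K ∧
      (∀ l ∈ Ls, Nondeg l ∧ ∀ x ∈ X, lval l x ≠ 0) ∧
      ∀ x ∈ X, (X.filter (fun y => ∀ l ∈ Ls, 0 < lval l x * lval l y)).card ≤ m := by
  rcases eq_or_lt_of_le hK with hK1 | hK2
  · -- K = 1
    obtain ⟨l₀, hnd, hX0, hcount⟩ := single X X (le_refl _) (X.card / 2) (Nat.div_le_self _ _)
    refine ⟨[l₀], by simp [← hK1], ?_, ?_⟩
    · intro l hl
      rw [List.mem_singleton] at hl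
      subst hl
      exact ⟨hnd, hX0⟩
    intro x hx
    have hparts : (X.filter (fun p => 0 < lval l₀ p)).card =
        X.card - (X.filter (fun p => lval l₀ p < 0)).card := by
      have hpart : X.filter (fun p => 0 < lval l₀ p) = X.filter (fun p => ¬ lval l₀ p < 0) := by
        apply filter_ext
        intro z hz
        have hne := hX0 z hz
        constructor
        · intro h; linarith
        · intro h
          rcases lt_trichotomy (lval l₀ z) 0 with h' | h' | h'
          · exact absurd h' h
          · exact absurd h' hne
          · exact h'
      rw [hpart]
      have := Finset.card_filter_add_card_filter_not (s := X)
        (p := fun p => lval l₀ p < 0)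
      omega
    have hmK : X.card ≤ 2 * m := by rw [← hK1] at hm; omega
    by_cases hgx : lval l₀ x < 0
    · have hsub : (X.filter (fun y => ∀ l ∈ [l₀], 0 < lval l x * lval l y)) ⊆
          X.filter (fun y => lval l₀ y < 0) := by
        intro y hy
        rw [Finset.mem_filter] at hy ⊢
        exact ⟨hy.1, sameside_neg (hy.2 l₀ (by simp)) hgx⟩
      refine le_trans (Finset.card_le_card hsub) ?_
      rw [hcount]
      omega
    · have hx0 : 0 < lval l₀ x := by
        rcases lt_trichotomy (lval l₀ x) 0 with h' | h' | h'
        · exact absurd h' hgx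
        · exact absurd h' (hX0 x hx)
        · exact h'
      have hsub : (X.filter (fun y => ∀ l ∈ [l₀], 0 < lval l x * lval l y)) ⊆
          X.filter (fun y => 0 < lval l₀ y) := by
        intro y hy
        rw [Finset.mem_filter] at hy ⊢
        exact ⟨hy.1, sameside_pos (hy.2 l₀ (by simp)) hx0⟩
      refine le_trans (Finset.card_le_card hsub) ?_
      rw [hparts, hcount]
      omega
  · -- K ≥ 2
    have hK' : 1 ≤ K - 1 := by omega
    set n₀ := min (2 * m) X.card with hn₀
    obtain ⟨l₀, hnd, hX0, hcount⟩ := single X X (le_refl _) n₀ (by rw [hn₀]; omega)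
    set C := X.filter (fun p => lval l₀ p < 0) with hC
    set R := X.filter (fun p => 0 < lval l₀ p) with hR
    have hpart : X.filter (fun p => 0 < lval l₀ p) = X.filter (fun p => ¬ lval l₀ p < 0) := by
      apply filter_ext
      intro z hz
      have hne := hX0 z hz
      constructor
      · intro h; linarith
      · intro h
        rcases lt_trichotomy (lval l₀ z) 0 with h' | h' | h'
        · exact absurd h' h
        · exact absurd h' hne
        · exact h'
    have hCR : C ∪ R = X := by
      rw [hC, hR, hpart, Finset.filter_union_filter_not_eq]
    have hRcard : R.card = X.card - n₀ := by
      rw [hR, hpart]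
      have := Finset.card_filter_add_card_filter_not (s := X)
        (p := fun p => lval l₀ p < 0)
      rw [hC] at hcount
      omega
    obtain ⟨Ls', hlen, hgood, hbound⟩ := claim X hgp m (K - 1) C R
      (Finset.filter_subset _ _) (Finset.filter_subset _ _) l₀ hnd
      (fun p hp => (Finset.mem_filter.mp hp).2)
      (fun p hp => (Finset.mem_filter.mp hp).2)
      hK' (by rw [hcount, hn₀]; exact min_le_left _ _)
      (by
        rw [hRcard]
        rcases le_or_gt X.card (2 * m) with h | h
        · have hn : n₀ = X.card := by rw [hn₀]; exact min_eq_right h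
          omega
        · have hn : n₀ = 2 * m := by rw [hn₀]; exact min_eq_left h.le
          have hK3 : K = (K - 1) + 1 := by omega
          have h2 : 2 * K * m = 2 * (K - 1) * m + 2 * m := by
            calc 2 * K * m = 2 * ((K - 1) + 1) * m := by rw [← hK3]
            _ = 2 * (K - 1) * m + 2 * m := by ring
          omega)
    refine ⟨l₀ :: Ls', by simp only [List.length_cons]; omega, ?_, ?_⟩
    · intro l hl
      rcases List.mem_cons.mp hl with rfl | hl
      · exact ⟨hnd, hX0⟩
      · exact hgood l hl
    · intro x hx
      have hx' : x ∈ C ∪ R := by rw [hCR]; exact hx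
      have := hbound x hx'
      rw [hCR] at this
      exact this



def vert (c : ℝ) : Set Pt := {p : Pt | 1 * p.1 + 0 * p.2 = c}

lemma vert_inj : Function.Injective vert := by
  intro c c' h
  have h1 : (c, 0) ∈ vert c := by simp [vert]
  rw [h] at h1
  simpa [vert] using h1

lemma pad (X : Finset Pt) (F₀ : Finset (Set Pt))
    (h₀ : ∀ S ∈ F₀, IsAffLine S ∧ Disjoint S (↑X : Set Pt)) :
    ∀ j : ℕ, ∃ F : Finset (Set Pt), F₀ ⊆ F ∧ F.card = F₀.card + j ∧
      ∀ S ∈ F, IsAffLine S ∧ Disjoint S (↑X : Set Pt) := by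
  intro j
  induction j with
  | zero => exact ⟨F₀, Finset.Subset.refl _, rfl, h₀⟩
  | succ j ih =>
    obtain ⟨F, hsub, hcard, hprops⟩ := ih
    have hbadfin : ({c : ℝ | vert c ∈ F} ∪ {c : ℝ | ∃ p ∈ X, p.1 = c}).Finite := by
      apply Set.Finite.union
      · have : {c : ℝ | vert c ∈ F} ⊆ ⋃ S ∈ F, {c : ℝ | vert c = S} := by
          intro c hc
          exact Set.mem_biUnion hc rfl
        refine Set.Finite.subset (Set.Finite.biUnion F.finite_toSet ?_) this
        intro S _
        apply Set.Subsingleton.finite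
        intro c hc c' hc'
        exact vert_inj (hc.trans hc'.symm)
      · have : {c : ℝ | ∃ p ∈ X, p.1 = c} ⊆ Prod.fst '' (↑X : Set Pt) := by
          rintro c ⟨p, hp, rfl⟩
          exact ⟨p, hp, rfl⟩
        exact Set.Finite.subset (Set.Finite.image _ X.finite_toSet) this
    obtain ⟨c, hc⟩ := Set.Infinite.nonempty
      ((Set.infinite_univ (α := ℝ)).diff hbadfin)
    obtain ⟨-, hcbad⟩ := hc
    have hcF : vert c ∉ F := fun h => hcbad (Or.inl h)
    have hcX : ∀ p ∈ X, p.1 ≠ c := fun p hp h => hcbad (Or.inr ⟨p, hp, h⟩)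
    refine ⟨insert (vert c) F, le_trans hsub (Finset.subset_insert _ _),
      by rw [Finset.card_insert_of_notMem hcF, hcard]; omega, ?_⟩
    intro S hS
    rcases Finset.mem_insert.mp hS with rfl | hS
    · constructor
      · exact ⟨1, 0, c, Or.inl one_ne_zero, rfl⟩
      · rw [Set.disjoint_left]
        intro p hp hpX
        simp only [vert, Set.mem_setOf_eq] at hp
        exact hcX p hpX (by linarith)
    · exact hprops S hS

theorem stmt_2' (X : Finset Pt) (N : ℕ) (hN : X.card = N) (hgp : GenPos ↑X)
    (K : ℕ) (hK : 1 ≤ K) :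
    ∃ L : Finset (Set Pt), L.card = K ∧
      (∀ l ∈ L, IsAffLine l ∧ Disjoint l (↑X : Set Pt)) ∧
      ∀ cell, IsCell ↑L cell →
        ((((↑X : Set Pt) ∩ cell).ncard : ℤ)) ≤ ⌈(N : ℝ) / (2 * K)⌉ := by
  set m : ℕ := (N + 2 * K - 1) / (2 * K) with hm
  have hKpos : 0 < 2 * K := by omega
  have hNle : N ≤ 2 * K * m := by
    have key : ∀ P r n2 : ℕ, P + r = n2 → r < 2 * K → n2 = N + 2 * K - 1 → N ≤ P := by
      intros P r n2 h1 h2 h3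
      omega
    refine key (2 * K * m) ((N + 2 * K - 1) % (2 * K)) (N + 2 * K - 1) ?_
      (Nat.mod_lt _ hKpos) rfl
    rw [hm]
    exact Nat.div_add_mod _ _
  have hmub : 2 * K * m ≤ N + 2 * K - 1 := by
    have h := Nat.div_mul_le_self (N + 2 * K - 1) (2 * K)
    rw [← hm] at h
    calc 2 * K * m = m * (2 * K) := by ring
    _ ≤ _ := h
  have hmz : (m : ℤ) ≤ ⌈(N : ℝ) / (2 * K)⌉ := by
    have hlt : ((m : ℤ) - 1) < ⌈(N : ℝ) / (2 * K)⌉ := by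
      rw [Int.lt_ceil]
      rw [lt_div_iff₀ (by positivity : (0:ℝ) < 2 * K)]
      have hcast : (2 * K * m : ℝ) ≤ (N : ℝ) + 2 * K - 1 := by
        have h2 : (2 * K * m : ℕ) ≤ N + 2 * K - 1 := hmub
        have h3 : ((2 * K * m : ℕ) : ℝ) ≤ ((N + 2 * K - 1 : ℕ) : ℝ) := by exact_mod_cast h2
        have h4 : ((N + 2 * K - 1 : ℕ) : ℝ) = (N : ℝ) + 2 * K - 1 := by
          have : 1 ≤ N + 2 * K := by omega
          push_cast [Nat.cast_sub this]
          ring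
        rw [h4] at h3
        exact_mod_cast h3
      push_cast
      nlinarith [hcast]
    omega
  obtain ⟨Ls, hlen, hgood, hbound⟩ := arrange X hgp K hK m (by rw [hN]; exact hNle)
  set base : Finset (Set Pt) := (Ls.map lset).toFinset with hbase
  have hbase_card : base.card ≤ K := by
    calc base.card ≤ (Ls.map lset).length := (Ls.map lset).toFinset_card_le
    _ = Ls.length := List.length_map _
    _ ≤ K := hlen
  have hbaseprops : ∀ S ∈ base, IsAffLine S ∧ Disjoint S (↑X : Set Pt) := by
    intro S hS
    rw [hbase, List.mem_toFinset, List.mem_map] at hS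
    obtain ⟨l, hl, rfl⟩ := hS
    obtain ⟨hnd, hav⟩ := hgood l hl
    constructor
    · exact ⟨l.1, l.2.1, l.2.2, hnd, lset_eq l⟩
    · rw [Set.disjoint_left]
      intro p hp hpX
      exact hav p hpX hp
  obtain ⟨L, hLsub, hLcard, hLprops⟩ := pad X base hbaseprops (K - base.card)
  refine ⟨L, by omega, hLprops, ?_⟩
  intro cell hcell
  obtain ⟨z, hz, rfl⟩ := hcell
  rcases Set.eq_empty_or_nonempty ((↑X : Set Pt) ∩ connectedComponentIn (⋃₀ ↑L)ᶜ z)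
    with hemp | ⟨x₀, hx₀X, hx₀c⟩
  · rw [hemp]
    simp only [Set.ncard_empty, Nat.cast_zero]
    exact Int.ceil_nonneg (by positivity)
  · have hsub : (↑X : Set Pt) ∩ connectedComponentIn (⋃₀ ↑L)ᶜ z ⊆
        ↑(X.filter (fun y => ∀ l ∈ Ls, 0 < lval l x₀ * lval l y)) := by
      rintro y ⟨hyX, hyc⟩
      simp only [Finset.coe_filter, Set.mem_setOf_eq]
      refine ⟨hyX, ?_⟩
      intro l hl
      have hlL : lset l ∈ L := hLsub (by
        rw [hbase, List.mem_toFinset]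
        exact List.mem_map_of_mem hl)
      apply same_side_of_preconnected isPreconnected_connectedComponentIn ?_ hx₀c hyc
      intro p hp
      have hp' : p ∈ (⋃₀ ↑L)ᶜ := connectedComponentIn_subset _ _ hp
      intro h0
      exact hp' (Set.mem_sUnion.mpr ⟨lset l, hlL, h0⟩)
    have h1 : ((↑X : Set Pt) ∩ connectedComponentIn (⋃₀ ↑L)ᶜ z).ncard ≤
        (X.filter (fun y => ∀ l ∈ Ls, 0 < lval l x₀ * lval l y)).card := by
      rw [← Set.ncard_coe_finset]
      exact Set.ncard_le_ncard hsub (Finset.finite_toSet _)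
    have h2 := hbound x₀ hx₀X
    have : ((↑X : Set Pt) ∩ connectedComponentIn (⋃₀ ↑L)ᶜ z).ncard ≤ m := le_trans h1 h2
    calc (((↑X : Set Pt) ∩ connectedComponentIn (⋃₀ ↑L)ᶜ z).ncard : ℤ) ≤ (m : ℤ) := by
          exact_mod_cast this
    _ ≤ ⌈(N : ℝ) / (2 * K)⌉ := hmz



end Stmt2Aux

/-- Corollary 2.2.1. -/
theorem stmt_2 (X : Finset Pt) (N : ℕ) (hN : X.card = N) (hgp : GenPos ↑X)
    (K : ℕ) (hK : 1 ≤ K) :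
    ∃ L : Finset (Set Pt), L.card = K ∧
      (∀ l ∈ L, IsAffLine l ∧ Disjoint l (↑X : Set Pt)) ∧
      ∀ cell, IsCell ↑L cell →
        ((((↑X : Set Pt) ∩ cell).ncard : ℤ)) ≤ ⌈(N : ℝ) / (2 * K)⌉ :=
  Stmt2Aux.stmt_2' X N hN hgp K hK
end

section
/- Let X be a finite set of N points in ℝ², let d ≥ 1 and K ≥ 1 be integers, and let J be a Jordan curve in ℝ² with stabbing number at most d such that X ⊆ J. Then for every set L of K affine lines in ℝ², each disjoint from X, some cell of L contains at least N/(K·d) points of X. -/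
open Set

section Aux

open Real

noncomputable def eCirc : ℝ → EuclideanSpace ℝ (Fin 2) :=
  fun t => (EuclideanSpace.equiv (Fin 2) ℝ).symm ![Real.cos t, Real.sin t]

lemma eCirc_apply_zero (t : ℝ) : eCirc t 0 = Real.cos t := rfl
lemma eCirc_apply_one (t : ℝ) : eCirc t 1 = Real.sin t := rfl

lemma eCirc_cont : Continuous eCirc := by
  have h : Continuous fun t => (![Real.cos t, Real.sin t] : Fin 2 → ℝ) := by
    apply continuous_pi
    intro i
    fin_cases i
    · simpa using Real.continuous_cos
    · simpa using Real.continuous_sin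
  exact (EuclideanSpace.equiv (Fin 2) ℝ).symm.continuous.comp h

lemma eCirc_mem_sphere (t : ℝ) : eCirc t ∈ Metric.sphere (0 : EuclideanSpace ℝ (Fin 2)) 1 := by
  rw [mem_sphere_zero_iff_norm, EuclideanSpace.norm_eq]
  simp [Fin.sum_univ_two, eCirc_apply_zero, eCirc_apply_one, sq_abs]

lemma eCirc_surj : Metric.sphere (0 : EuclideanSpace ℝ (Fin 2)) 1 ⊆ Set.range eCirc := by
  intro p hp
  rw [mem_sphere_zero_iff_norm, EuclideanSpace.norm_eq] at hp
  have hnn : (0:ℝ) ≤ ∑ i, ‖p i‖^2 := by positivity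
  have h1 : (∑ i, ‖p i‖^2 : ℝ) = 1 := by nlinarith [Real.sq_sqrt hnn, hp]
  rw [Fin.sum_univ_two] at h1
  simp only [Real.norm_eq_abs, sq_abs] at h1
  set z : ℂ := ⟨p 0, p 1⟩ with hz
  have habs : ‖z‖ = 1 := by
    rw [Complex.norm_def, Complex.normSq_mk]
    rw [show p 0 * p 0 + p 1 * p 1 = 1 by nlinarith]
    exact Real.sqrt_one
  have hz0 : z ≠ 0 := by
    intro h; rw [h] at habs; simp at habs
  refine ⟨Complex.arg z, ?_⟩
  have hcos : Real.cos (Complex.arg z) = p 0 := by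
    rw [Complex.cos_arg hz0, habs]; simp [hz]
  have hsin : Real.sin (Complex.arg z) = p 1 := by
    rw [Complex.sin_arg, habs]; simp [hz]
  ext i
  fin_cases i
  · simpa [eCirc_apply_zero] using hcos
  · simpa [eCirc_apply_one] using hsin

lemma eCirc_eq_iff (s t : ℝ) : eCirc s = eCirc t ↔ ∃ k : ℤ, s = t + k * (2 * π) := by
  constructor
  · intro h
    have hcos : Real.cos s = Real.cos t := by
      have := congrArg (fun v => v 0) h
      simpa [eCirc_apply_zero] using this
    have hsin : Real.sin s = Real.sin t := by
      have := congrArg (fun v => v 1) h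
      simpa [eCirc_apply_one] using this
    have hang : (s : Real.Angle) = (t : Real.Angle) := Real.Angle.cos_sin_inj hcos hsin
    obtain ⟨k, hk⟩ := Real.Angle.angle_eq_iff_two_pi_dvd_sub.1 hang
    exact ⟨k, by linarith [hk]⟩
  · rintro ⟨k, rfl⟩
    have hc : Real.cos (t + k * (2*π)) = Real.cos t := Real.cos_add_int_mul_two_pi t k
    have hs : Real.sin (t + k * (2*π)) = Real.sin t := Real.sin_add_int_mul_two_pi t k
    unfold eCirc
    rw [hc, hs]

lemma exists_param {J : Set Pt} (hJ : IsJordanCurve J) :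
    ∃ g : ℝ → Pt, Continuous g ∧ (∀ s t : ℝ, g s = g t ↔ ∃ k : ℤ, s = t + k * (2 * π)) ∧
      Set.range g = J := by
  obtain ⟨f, hfc, hfi, hfJ⟩ := hJ
  refine ⟨f ∘ eCirc, hfc.comp_continuous eCirc_cont eCirc_mem_sphere, ?_, ?_⟩
  · intro s t
    constructor
    · intro h
      exact (eCirc_eq_iff s t).1 (hfi (eCirc_mem_sphere s) (eCirc_mem_sphere t) h)
    · intro h
      simp only [Function.comp_apply]
      rw [(eCirc_eq_iff s t).2 h]
  · have hre : Set.range eCirc = Metric.sphere 0 1 :=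
      le_antisymm (Set.range_subset_iff.2 eCirc_mem_sphere) eCirc_surj
    rw [Set.range_comp, hre, hfJ]

lemma sep_lemma {g : ℝ → Pt} (hgc : Continuous g)
    (hg : ∀ s t : ℝ, g s = g t ↔ ∃ k : ℤ, s = t + k * (2 * π))
    {Z : Set Pt} (hZ : IsPreconnected Z) (hZJ : Z ⊆ Set.range g)
    {p q s₁ s₂ : ℝ} (hpq : p < q) (hq2 : q < p + 2 * π)
    (hs₁ : q - 2 * π < s₁) (hs₁p : s₁ < p) (hs₂p : p < s₂) (hs₂q : s₂ < q)
    (hgp : g p ∉ Z) (hgq : g q ∉ Z) (h₁ : g s₁ ∈ Z) (h₂ : g s₂ ∈ Z) : False := by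
  have h2π : (0:ℝ) < 2 * π := by positivity
  set t₁ := g '' Set.Icc p q with ht₁def
  set t₂ := g '' Set.Icc q (p + 2 * π) with ht₂def
  have ht₁ : IsClosed t₁ := (isCompact_Icc.image hgc).isClosed
  have ht₂ : IsClosed t₂ := (isCompact_Icc.image hgc).isClosed
  have hcover : Z ⊆ t₁ ∪ t₂ := by
    intro z hz
    obtain ⟨r, hr⟩ := hZJ hz
    obtain ⟨n, hn, -⟩ := existsUnique_sub_zsmul_mem_Ico h2π r p
    have hgr' : g (r - n • (2 * π)) = z := by
      rw [← hr]
      exact (hg _ _).2 ⟨-n, by push_cast [zsmul_eq_mul]; ring⟩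
    rcases le_or_gt (r - n • (2 * π)) q with h | h
    · exact Or.inl ⟨r - n • (2 * π), ⟨hn.1, h⟩, hgr'⟩
    · exact Or.inr ⟨r - n • (2 * π), ⟨h.le, hn.2.le⟩, hgr'⟩
  have hne₁ : (Z ∩ t₁).Nonempty := ⟨g s₂, h₂, ⟨s₂, ⟨hs₂p.le, hs₂q.le⟩, rfl⟩⟩
  have hne₂ : (Z ∩ t₂).Nonempty := by
    refine ⟨g s₁, h₁, ⟨s₁ + 2 * π, ⟨by linarith, by linarith⟩, ?_⟩⟩
    exact (hg _ _).2 ⟨1, by push_cast; ring⟩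
  obtain ⟨z, hzZ, hz12⟩ :=
    isPreconnected_closed_iff.1 hZ t₁ t₂ ht₁ ht₂ hcover hne₁ hne₂
  obtain ⟨⟨r, hrI, hrz⟩, ⟨r', hr'I, hr'z⟩⟩ := hz12
  obtain ⟨k, hk⟩ := (hg r r').1 (hrz.trans hr'z.symm)
  have hkle : (k:ℝ) * (2*π) ≤ 0 := by
    have : r - r' ≤ 0 := by linarith [hrI.2, hr'I.1]
    linarith [hk]
  have hkge : -(2*π) ≤ (k:ℝ) * (2*π) := by
    have : -(2*π) ≤ r - r' := by linarith [hrI.1, hr'I.2]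
    linarith [hk]
  have hk0 : (k:ℝ) ≤ 0 := by nlinarith
  have hk1 : (-1:ℝ) ≤ (k:ℝ) := by nlinarith
  have hk01 : k = 0 ∨ k = -1 := by
    have h1 : k ≤ 0 := by exact_mod_cast hk0
    have h2 : -1 ≤ k := by exact_mod_cast hk1
    omega
  rcases hk01 with rfl | rfl
  · have hrr : r = r' := by push_cast at hk; linarith
    have hreq : r = q := le_antisymm hrI.2 (hrr ▸ hr'I.1)
    exact hgq (hreq ▸ hrz ▸ hzZ)
  · have hrr : r = r' - 2*π := by push_cast at hk; linarith
    have hreq : r = p := le_antisymm (by linarith [hr'I.2]) hrI.1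
    exact hgp (hreq ▸ hrz ▸ hzZ)

lemma exists_off_lines (L : Finset (Set Pt)) (hlines : ∀ l ∈ L, IsAffLine l) :
    ∃ p : Pt, p ∉ ⋃₀ (L : Set (Set Pt)) := by
  have hfin : (⋃ l ∈ L, {t : ℝ | (t, t * t) ∈ l}).Finite := by
    refine Set.Finite.biUnion L.finite_toSet fun l hl => ?_
    obtain ⟨a, b, c, hab, rfl⟩ := hlines l hl
    have hsub : {t : ℝ | (t, t * t) ∈ {p : Pt | a * p.1 + b * p.2 = c}} ⊆
        {x | (Polynomial.C b * Polynomial.X ^ 2 + Polynomial.C a * Polynomial.X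
          - Polynomial.C c).IsRoot x} := by
      intro t ht
      simp only [Set.mem_setOf_eq] at ht ⊢
      simp only [Polynomial.IsRoot, Polynomial.eval_sub, Polynomial.eval_add,
        Polynomial.eval_mul, Polynomial.eval_pow, Polynomial.eval_C, Polynomial.eval_X]
      nlinarith [ht]
    refine Set.Finite.subset (Polynomial.finite_setOf_isRoot ?_) hsub
    intro h0
    have h1 := congrArg (fun p => Polynomial.coeff p 1) h0
    have h2 := congrArg (fun p => Polynomial.coeff p 2) h0
    simp [Polynomial.coeff_add, Polynomial.coeff_sub, Polynomial.coeff_C_mul,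
      Polynomial.coeff_X_pow, Polynomial.coeff_X, Polynomial.coeff_C] at h1 h2
    rcases hab with h | h
    · exact h h1
    · exact h h2
  obtain ⟨t, ht⟩ := hfin.infinite_compl.nonempty
  refine ⟨(t, t * t), fun hmem => ?_⟩
  obtain ⟨l, hl, hpl⟩ := hmem
  exact ht (Set.mem_biUnion hl hpl)

end Aux

/-- Lemma 3.1. -/
theorem stmt_5 (X : Finset Pt) (N : ℕ) (hN : X.card = N) (d K : ℕ)
    (hd : 1 ≤ d) (hK : 1 ≤ K) (J : Set Pt) (hJ : IsJordanCurve J)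
    (hstab : StabLE J d) (hXJ : (↑X : Set Pt) ⊆ J)
    (L : Finset (Set Pt)) (hL : L.card = K)
    (hlines : ∀ l ∈ L, IsAffLine l ∧ Disjoint l (↑X : Set Pt)) :
    ∃ cell, IsCell ↑L cell ∧
      (N : ℝ) / (K * d) ≤ ((((↑X : Set Pt) ∩ cell).ncard : ℝ)) := by
  classical
  open Real in
  obtain ⟨g, hgc, hg, hgr⟩ := exists_param hJ
  have h2π : (0:ℝ) < 2 * π := by positivity
  set Λ : Set Pt := ⋃₀ (L : Set (Set Pt)) with hΛ
  have hXoff : ∀ x ∈ (X : Set Pt), x ∈ Λᶜ := by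
    intro x hx hxΛ
    obtain ⟨l, hlL, hxl⟩ := hxΛ
    exact (Set.disjoint_left.1 (hlines l hlL).2) hxl hx
  rcases X.eq_empty_or_nonempty with hXe | hXne
  · -- X empty
    have hN0 : N = 0 := by rw [← hN, hXe]; rfl
    obtain ⟨p₀, hp₀⟩ := exists_off_lines L (fun l hl => (hlines l hl).1)
    refine ⟨connectedComponentIn Λᶜ p₀, ⟨p₀, hp₀, rfl⟩, ?_⟩
    rw [hN0]
    simp only [Nat.cast_zero, zero_div]
    exact Nat.cast_nonneg _
  rcases Set.eq_empty_or_nonempty (J ∩ Λ) with hU | hU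
  · -- J avoids all the lines: everything is in one cell
    have hJpre : IsPreconnected J := by
      rw [← hgr, ← Set.image_univ]
      exact isPreconnected_univ.image g hgc.continuousOn
    have hJΛ : J ⊆ Λᶜ := by
      intro x hxJ hxΛ
      exact (Set.eq_empty_iff_forall_notMem.1 hU x) ⟨hxJ, hxΛ⟩
    have hg0J : g 0 ∈ J := by rw [← hgr]; exact ⟨0, rfl⟩
    refine ⟨connectedComponentIn Λᶜ (g 0), ⟨g 0, hJΛ hg0J, rfl⟩, ?_⟩
    have hsub : J ⊆ connectedComponentIn Λᶜ (g 0) :=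
      hJpre.subset_connectedComponentIn hg0J hJΛ
    have hXcell : (X : Set Pt) ∩ connectedComponentIn Λᶜ (g 0) = (X : Set Pt) :=
      Set.inter_eq_left.2 (fun x hx => hsub (hXJ hx))
    rw [hXcell, Set.ncard_coe_finset, hN]
    apply div_le_self (Nat.cast_nonneg _)
    have : (1:ℕ) ≤ K * d := Nat.one_le_iff_ne_zero.2 (by positivity)
    calc (1:ℝ) ≤ ((K * d : ℕ) : ℝ) := by exact_mod_cast this
      _ = (K:ℝ) * d := by push_cast; ring
  -- Main case
  obtain ⟨u₀, hu₀J, hu₀Λ⟩ := hU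
  obtain ⟨A, hA⟩ : ∃ A, g A = u₀ := by rw [← hgr] at hu₀J; exact hu₀J
  have hperiod : ∀ r : ℝ, g (r + 2 * π) = g r := fun r => (hg _ _).2 ⟨1, by push_cast; ring⟩
  have hτex : ∀ x ∈ (X : Set Pt), ∃ s : ℝ, (A ≤ s ∧ s < A + 2*π) ∧ g s = x := by
    intro x hx
    obtain ⟨r, hr⟩ : ∃ r, g r = x := by
      have : x ∈ Set.range g := by rw [hgr]; exact hXJ hx
      exact this
    obtain ⟨n, hn, -⟩ := existsUnique_sub_zsmul_mem_Ico h2π r A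
    exact ⟨r - n • (2*π), ⟨hn.1, hn.2⟩,
      by rw [← hr]; exact (hg _ _).2 ⟨-n, by push_cast [zsmul_eq_mul]; ring⟩⟩
  choose! τ hτw hτg using hτex
  set T : Finset ℝ := X.image τ with hT
  have hTcard : T.card = N := by
    rw [hT, Finset.card_image_of_injOn, hN]
    intro x hx y hy hxy
    rw [← hτg x hx, ← hτg y hy, hxy]
  set ord := T.orderIsoOfFin hTcard with hord
  set t : Fin N → ℝ := fun i => (ord i : ℝ) with ht
  have htSM : StrictMono t := fun i j hij => Subtype.coe_lt_coe.2 (ord.strictMono hij)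
  have hmemT : ∀ i, (t i) ∈ T := fun i => (ord i).2
  have htX : ∀ i, g (t i) ∈ (X : Set Pt) := by
    intro i
    obtain ⟨x, hx, hxt⟩ := Finset.mem_image.1 (hmemT i)
    rw [← hxt, hτg x hx]
    exact hx
  have htIco : ∀ i, A ≤ t i ∧ t i < A + 2*π := by
    intro i
    obtain ⟨x, hx, hxt⟩ := Finset.mem_image.1 (hmemT i)
    rw [← hxt]
    exact hτw x hx
  have hNpos : 0 < N := by rw [← hN]; exact Finset.card_pos.2 hXne
  set i0 : Fin N := ⟨0, hNpos⟩ with hi0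
  set lastI : Fin N := ⟨N-1, by omega⟩ with hlastI
  set nxt : Fin N → ℝ := fun i =>
    if h : (i:ℕ)+1 < N then t ⟨(i:ℕ)+1, h⟩ else t i0 + 2*π with hnxt
  have hnxt_pos : ∀ (i : Fin N) (h : (i:ℕ)+1 < N), nxt i = t ⟨(i:ℕ)+1, h⟩ := by
    intro i h; simp [hnxt, h]
  have hnxt_neg : ∀ (i : Fin N), ¬((i:ℕ)+1 < N) → nxt i = t i0 + 2*π := by
    intro i h; simp [hnxt, h]
  have hnxt_gt : ∀ i, t i < nxt i := by
    intro i
    by_cases h : (i:ℕ)+1 < N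
    · rw [hnxt_pos i h]
      exact htSM (by simp [Fin.lt_def])
    · rw [hnxt_neg i h]
      linarith [(htIco i).2, (htIco i0).1]
  have hnxt_le : ∀ i, nxt i ≤ t i0 + 2*π := by
    intro i
    by_cases h : (i:ℕ)+1 < N
    · rw [hnxt_pos i h]
      linarith [(htIco ⟨(i:ℕ)+1, h⟩).2, (htIco i0).1]
    · rw [hnxt_neg i h]
  have hnxtX : ∀ i, g (nxt i) ∈ (X : Set Pt) := by
    intro i
    by_cases h : (i:ℕ)+1 < N
    · rw [hnxt_pos i h]; exact htX _
    · rw [hnxt_neg i h, hperiod]; exact htX i0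
  set Cross : Fin N → Prop := fun i => ∃ s, s ∈ Set.Icc (t i) (nxt i) ∧ g s ∈ Λ with hCross
  set ψ : Fin N → Set Pt := fun i => connectedComponentIn Λᶜ (g (t i)) with hψ
  have hCrossLast : Cross lastI := by
    refine ⟨A + 2*π, ⟨?_, ?_⟩, ?_⟩
    · exact (htIco lastI).2.le
    · rw [hnxt_neg lastI (by simp [hlastI]; omega)]
      linarith [(htIco i0).1]
    · rw [hperiod, hA]; exact hu₀Λ
  have hstep : ∀ (i : Fin N) (h : (i:ℕ)+1 < N), ¬ Cross i → ψ i = ψ ⟨(i:ℕ)+1, h⟩ := by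
    intro i h hnc
    have hseg : g '' Set.Icc (t i) (nxt i) ⊆ Λᶜ := by
      rintro _ ⟨s, hs, rfl⟩ hmem
      exact hnc ⟨s, hs, hmem⟩
    have hpre : IsPreconnected (g '' Set.Icc (t i) (nxt i)) :=
      isPreconnected_Icc.image _ hgc.continuousOn
    have h1 : g (t i) ∈ g '' Set.Icc (t i) (nxt i) := ⟨t i, ⟨le_rfl, (hnxt_gt i).le⟩, rfl⟩
    have h2 : g (nxt i) ∈ g '' Set.Icc (t i) (nxt i) := ⟨nxt i, ⟨(hnxt_gt i).le, le_rfl⟩, rfl⟩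
    have hsub := hpre.subset_connectedComponentIn h1 hseg
    have hmem2 : g (nxt i) ∈ connectedComponentIn Λᶜ (g (t i)) := hsub h2
    have heq := connectedComponentIn_eq hmem2
    rw [hψ]
    simp only
    rw [heq, hnxt_pos i h]
  have hchain : ∀ n : ℕ, ∀ i j : Fin N, (j:ℕ) = (i:ℕ) + n →
      (∀ j' : Fin N, i ≤ j' → j' < j → ¬ Cross j') → ψ i = ψ j := by
    intro n
    induction n with
    | zero =>
      intro i j hij _
      have : i = j := Fin.ext (by omega)
      rw [this]
    | succ n ih =>
      intro i j hij hnc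
      have hi1 : (i:ℕ) + 1 < N := by have := j.isLt; omega
      have h1 : ψ i = ψ ⟨(i:ℕ)+1, hi1⟩ :=
        hstep i hi1 (hnc i le_rfl (Fin.lt_def.2 (by omega)))
      have h2 : ψ ⟨(i:ℕ)+1, hi1⟩ = ψ j := by
        apply ih ⟨(i:ℕ)+1, hi1⟩ j (show (j:ℕ) = ((i:ℕ)+1) + n by omega)
        intro j' hj1 hj2
        exact hnc j' (le_trans (Fin.le_def.2 (show (i:ℕ) ≤ (i:ℕ)+1 by omega)) hj1) hj2
      exact h1.trans h2
  set CS : Fin N → Finset (Fin N) :=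
    fun i => Finset.univ.filter (fun j => i ≤ j ∧ Cross j) with hCS
  have hCSne : ∀ i, (CS i).Nonempty := by
    intro i
    refine ⟨lastI, ?_⟩
    simp only [hCS, Finset.mem_filter, Finset.mem_univ, true_and]
    exact ⟨Fin.le_def.2 (by simp [hlastI]; omega), hCrossLast⟩
  set σ : Fin N → Fin N := fun i => (CS i).min' (hCSne i) with hσ
  have hσmem : ∀ i, i ≤ σ i ∧ Cross (σ i) := by
    intro i
    have := (CS i).min'_mem (hCSne i)
    simp only [hCS, Finset.mem_filter, Finset.mem_univ, true_and] at this
    exact this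
  have hσmin : ∀ i j, i ≤ j → Cross j → σ i ≤ j := by
    intro i j h1 h2
    apply Finset.min'_le
    simp only [hCS, Finset.mem_filter, Finset.mem_univ, true_and]
    exact ⟨h1, h2⟩
  have hψσ : ∀ i, ψ i = ψ (σ i) := by
    intro i
    apply hchain ((σ i : ℕ) - (i : ℕ)) i (σ i) (by have := (hσmem i).1; rw [Fin.le_def] at this; omega)
    intro j' h1 h2 hc
    exact absurd (hσmin i j' h1 hc) (not_le.2 h2)
  set CrossF : Finset (Fin N) := Finset.univ.filter (fun i => Cross i) with hCrossF
  have hCrossFne : CrossF.Nonempty := ⟨lastI, by simp [hCrossF]; exact hCrossLast⟩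
  -- key counting
  have hcount : CrossF.card ≤ K * d := by
    by_contra hcon
    push_neg at hcon
    have hw : ∀ i ∈ CrossF, ∃ s, (t i < s ∧ s < nxt i) ∧ ∃ l, l ∈ L ∧ g s ∈ l := by
      intro i hi
      have hic : Cross i := (Finset.mem_filter.1 hi).2
      obtain ⟨s, hsI, hsΛ⟩ := hic
      obtain ⟨l, hlL, hsl⟩ := hsΛ
      have hlL' : l ∈ L := hlL
      have hs1 : t i ≠ s := by
        intro h
        exact (Set.disjoint_left.1 (hlines l hlL').2) (h ▸ hsl) (htX i)
      have hs2 : s ≠ nxt i := by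
        intro h
        exact (Set.disjoint_left.1 (hlines l hlL').2) (h ▸ hsl) (hnxtX i)
      exact ⟨s, ⟨lt_of_le_of_ne hsI.1 hs1, lt_of_le_of_ne hsI.2 hs2⟩, l, hlL', hsl⟩
    choose! s hsI lf hlfL hlfmem using hw
    have hmaps : ∀ i ∈ CrossF, lf i ∈ L := hlfL
    obtain ⟨l, hlL, hfib⟩ := Finset.exists_lt_card_fiber_of_mul_lt_card_of_maps_to hmaps
      (by rw [hL]; exact hcon)
    set F := CrossF.filter (fun i => lf i = l) with hF
    obtain ⟨F', hF'sub, hF'card⟩ := Finset.exists_subset_card_eq (Nat.succ_le_of_lt hfib)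
    set emb := F'.orderIsoOfFin hF'card with hemb
    have hFmem : ∀ i, i ∈ F → i ∈ CrossF ∧ lf i = l := fun i hi => Finset.mem_filter.1 hi
    have hmemJl : ∀ i, i ∈ F → g (s i) ∈ J ∩ l := by
      intro i hi
      refine ⟨by rw [← hgr]; exact ⟨_, rfl⟩, ?_⟩
      rw [← (hFmem i hi).2]
      exact hlfmem i (hFmem i hi).1
    have key : ∀ i j : Fin N, i ∈ F → j ∈ F → i < j →
        connectedComponentIn (J ∩ l) (g (s i)) ≠ connectedComponentIn (J ∩ l) (g (s j)) := by
      intro i j hiF hjF hij heq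
      have hiC := (hFmem i hiF).1
      have hjC := (hFmem j hjF).1
      have hsi := hsI i hiC
      have hsj := hsI j hjC
      have hiN : (i:ℕ)+1 < N := by
        have h1 : (i:ℕ) < (j:ℕ) := Fin.lt_def.1 hij
        have := j.isLt; omega
      have hpi : nxt i = t ⟨(i:ℕ)+1, hiN⟩ := hnxt_pos i hiN
      set Z := connectedComponentIn (J ∩ l) (g (s i)) with hZdef
      have hZ1 : g (s i) ∈ Z := mem_connectedComponentIn (hmemJl i hiF)
      have hZ2 : g (s j) ∈ Z := by
        rw [heq]
        exact mem_connectedComponentIn (hmemJl j hjF)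
      have hZl : Z ⊆ J ∩ l := connectedComponentIn_subset _ _
      have hZrange : Z ⊆ Set.range g := fun z hz => by
        rw [hgr]; exact (hZl hz).1
      -- inequalities
      have hmono : t ⟨(i:ℕ)+1, hiN⟩ ≤ t j := htSM.monotone (Fin.le_def.2 (by
        have := Fin.lt_def.1 hij; simp; omega))
      have ht0i : t i0 ≤ t ⟨(i:ℕ)+1, hiN⟩ := htSM.monotone (Fin.le_def.2 (by simp [hi0]))
      have ht0i' : t i0 < t ⟨(i:ℕ)+1, hiN⟩ := htSM (Fin.lt_def.2 (by simp [hi0]))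
      have hq2 : nxt j < nxt i + 2*π := by
        rw [hpi]
        by_cases h : (j:ℕ)+1 < N
        · rw [hnxt_pos j h]
          linarith [(htIco ⟨(j:ℕ)+1, h⟩).2, (htIco i0).1]
        · rw [hnxt_neg j h]
          linarith
      have hs1b : nxt j - 2*π < s i := by
        have := hnxt_le j
        have := htSM.monotone (Fin.le_def.2 (by simp [hi0]) : i0 ≤ i)
        linarith [hsi.1]
      refine sep_lemma hgc hg isPreconnected_connectedComponentIn hZrange
        (p := nxt i) (q := nxt j) (s₁ := s i) (s₂ := s j)
        ?_ hq2 hs1b hsi.2 ?_ hsj.2 ?_ ?_ hZ1 hZ2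
      · rw [hpi]; linarith [hsj.1, hsj.2]
      · rw [hpi]; linarith [hsj.1]
      · intro hmem
        exact (Set.disjoint_left.1 (hlines l hlL).2) (hZl hmem).2 (hnxtX i)
      · intro hmem
        exact (Set.disjoint_left.1 (hlines l hlL).2) (hZl hmem).2 (hnxtX j)
    have hmem' : ∀ km : Fin (d+1), g (s ((emb km : {x // x ∈ F'}) : Fin N)) ∈ J ∩ l :=
      fun km => hmemJl _ (hF'sub (emb km).2)
    obtain ⟨k1, k2, hk12, hcomp⟩ := hstab l (hlines l hlL).1
      (fun km => g (s ((emb km : {x // x ∈ F'}) : Fin N))) hmem'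
    have hembne : ((emb k1 : {x // x ∈ F'}) : Fin N) ≠ ((emb k2 : {x // x ∈ F'}) : Fin N) := by
      intro h
      exact hk12 (emb.injective (Subtype.ext h))
    rcases hembne.lt_or_gt with h | h
    · exact key _ _ (hF'sub (emb k1).2) (hF'sub (emb k2).2) h hcomp
    · exact key _ _ (hF'sub (emb k2).2) (hF'sub (emb k1).2) h hcomp.symm
  -- pigeonhole over fibers of σ
  have hσmaps : ∀ i ∈ (Finset.univ : Finset (Fin N)), σ i ∈ CrossF := by
    intro i _
    simp only [hCrossF, Finset.mem_filter, Finset.mem_univ, true_and]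
    exact (hσmem i).2
  have hsum : (Finset.univ : Finset (Fin N)).card
      = ∑ j ∈ CrossF, (Finset.univ.filter (fun i => σ i = j)).card :=
    Finset.card_eq_sum_card_fiberwise hσmaps
  have hCpos : 0 < CrossF.card := Finset.card_pos.2 hCrossFne
  have hCne : (CrossF.card : ℝ) ≠ 0 := Nat.cast_ne_zero.2 (Nat.pos_iff_ne_zero.1 hCpos)
  obtain ⟨j₀, hj₀C, hj₀⟩ : ∃ j ∈ CrossF,
      (N:ℝ)/(CrossF.card) ≤ ((Finset.univ.filter (fun i => σ i = j)).card : ℝ) := by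
    apply Finset.exists_le_of_sum_le hCrossFne
    have hL1 : ∑ _j ∈ CrossF, (N:ℝ)/(CrossF.card) = N := by
      rw [Finset.sum_const, nsmul_eq_mul, mul_div_cancel₀ _ hCne]
    rw [hL1]
    have hcast : ((Finset.univ : Finset (Fin N)).card : ℝ)
        = ∑ j ∈ CrossF, ((Finset.univ.filter (fun i => σ i = j)).card : ℝ) := by
      rw [hsum]
      exact Nat.cast_sum _ _
    rw [← hcast, Finset.card_univ, Fintype.card_fin]
  set fib := Finset.univ.filter (fun i => σ i = j₀) with hfib
  refine ⟨ψ j₀, ⟨g (t j₀), hXoff _ (htX j₀), rfl⟩, ?_⟩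
  have hfibcell : ∀ i ∈ fib, g (t i) ∈ (X : Set Pt) ∩ ψ j₀ := by
    intro i hi
    refine ⟨htX i, ?_⟩
    have h1 : g (t i) ∈ ψ i := mem_connectedComponentIn (hXoff _ (htX i))
    rw [hψσ i] at h1
    rw [← (Finset.mem_filter.1 hi).2]
    exact h1
  have hinj : Set.InjOn (fun i => g (t i)) ↑fib := by
    intro i _ j _ hgij
    obtain ⟨k, hk⟩ := (hg _ _).1 hgij
    have h1 := htIco i
    have h2 := htIco j
    have hklt : (k:ℝ)*(2*π) < 2*π := by linarith
    have hkgt : -(2*π) < (k:ℝ)*(2*π) := by linarith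
    have hk1 : (k:ℝ) < 1 := by nlinarith
    have hk2 : (-1:ℝ) < (k:ℝ) := by nlinarith
    have hk0 : k = 0 := by
      have a1 : k < 1 := by exact_mod_cast hk1
      have a2 : -1 < k := by exact_mod_cast hk2
      omega
    have : t i = t j := by rw [hk0] at hk; push_cast at hk; linarith
    exact htSM.injective this
  have hcard : (fib.card : ℝ) ≤ (((X : Set Pt) ∩ ψ j₀).ncard : ℝ) := by
    have hsub : ↑(fib.image (fun i => g (t i))) ⊆ (X : Set Pt) ∩ ψ j₀ := by
      intro x hx
      obtain ⟨i, hi, rfl⟩ := Finset.mem_coe.1 hx |> Finset.mem_image.1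
      exact hfibcell i hi
    have hfin : ((X : Set Pt) ∩ ψ j₀).Finite := X.finite_toSet.inter_of_left _
    have h1 := Set.ncard_le_ncard hsub hfin
    rw [Set.ncard_coe_finset, Finset.card_image_of_injOn hinj] at h1
    exact_mod_cast h1
  have hstep1 : (N:ℝ) / ((K:ℝ) * d) ≤ (N:ℝ) / CrossF.card := by
    apply div_le_div_of_nonneg_left (Nat.cast_nonneg _) (by exact_mod_cast hCpos)
    calc (CrossF.card : ℝ) ≤ ((K*d : ℕ) : ℝ) := by exact_mod_cast hcount
      _ = (K:ℝ) * d := by push_cast; ring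
  calc (N:ℝ) / ((K:ℝ) * d) ≤ (N:ℝ) / CrossF.card := hstep1
    _ ≤ (fib.card : ℝ) := hj₀
    _ ≤ _ := hcard
end
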